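/- arXiv:1701.06365 — 5 statements merged into one kernel-verified Lean document; each statement's English description precedes it below -/
import Mathlib

section
/- Let Γ be a computable amenable group. Then there exists a canonically computable, tempered, two-sided Følner sequence (F_n)_{n≥1} in Γ. -/
open Pointwise Finset Encodable

namespace FolnerAux
variable {Γ : Type*} [Group Γ] [DecidableEq Γ]

/-- convolution count -/
def cv (C D : Finset Γ) (x : Γ) : ℕ := ((C ×ˢ D).filter fun p => p.1 * p.2 = x).card

lemma cv_mono {C C' : Finset Γ} (D : Finset Γ) (h : C ⊆ C') (x : Γ) :
    cv C D x ≤ cv C' D x :=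
  Finset.card_le_card (Finset.filter_subset_filter _
    (Finset.product_subset_product h (Finset.Subset.refl _)))

lemma cv_mono_right (C : Finset Γ) {D D' : Finset Γ} (h : D ⊆ D') (x : Γ) :
    cv C D x ≤ cv C D' x :=
  Finset.card_le_card (Finset.filter_subset_filter _
    (Finset.product_subset_product (Finset.Subset.refl _) h))

lemma cv_union_le (C C' D : Finset Γ) (x : Γ) :
    cv (C ∪ C') D x ≤ cv C D x + cv C' D x := by
  unfold cv
  rw [Finset.union_product, Finset.filter_union]
  exact Finset.card_union_le _ _

lemma cv_union_le_right (C D D' : Finset Γ) (x : Γ) :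
    cv C (D ∪ D') x ≤ cv C D x + cv C D' x := by
  unfold cv
  rw [Finset.product_union, Finset.filter_union]
  exact Finset.card_union_le _ _

lemma sum_cv {C D U : Finset Γ} (hU : C * D ⊆ U) :
    ∑ x ∈ U, cv C D x = C.card * D.card := by
  rw [← Finset.card_product]
  exact (Finset.card_eq_sum_card_fiberwise
    (fun p hp => hU (Finset.mul_mem_mul (Finset.mem_product.1 hp).1
      (Finset.mem_product.1 hp).2))).symm

lemma cv_le (C D : Finset Γ) (x : Γ) : cv C D x ≤ C.card * D.card := by
  rw [← Finset.card_product]; exact Finset.card_filter_le _ _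

lemma mem_of_cv_pos {C D : Finset Γ} {x : Γ} (h : 0 < cv C D x) : x ∈ C * D := by
  obtain ⟨p, hp⟩ := Finset.card_pos.1 h
  rw [Finset.mem_filter, Finset.mem_product] at hp
  exact hp.2 ▸ Finset.mul_mem_mul hp.1.1 hp.1.2

lemma cv_image_left (g : Γ) (C D : Finset Γ) (x : Γ) :
    cv (C.image (g * ·)) D x = cv C D (g⁻¹ * x) := by
  unfold cv
  refine Finset.card_bij' (fun p _ => (g⁻¹ * p.1, p.2)) (fun q _ => (g * q.1, q.2)) ?_ ?_ ?_ ?_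
  · rintro ⟨a, b⟩ hp
    rw [Finset.mem_filter, Finset.mem_product] at hp ⊢
    obtain ⟨⟨ha, hb⟩, he⟩ := hp
    obtain ⟨c, hc, rfl⟩ := Finset.mem_image.1 ha
    simp only [inv_mul_cancel_left]
    exact ⟨⟨hc, hb⟩, by rw [← he]; group⟩
  · rintro ⟨a, b⟩ hq
    rw [Finset.mem_filter, Finset.mem_product] at hq ⊢
    exact ⟨⟨Finset.mem_image_of_mem _ hq.1.1, hq.1.2⟩, by rw [mul_assoc, hq.2]; group⟩
  · rintro ⟨a, b⟩ _; simp
  · rintro ⟨a, b⟩ _; simp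

lemma cv_image_right (g : Γ) (C D : Finset Γ) (x : Γ) :
    cv C (D.image (· * g)) x = cv C D (x * g⁻¹) := by
  unfold cv
  refine Finset.card_bij' (fun p _ => (p.1, p.2 * g⁻¹)) (fun q _ => (q.1, q.2 * g)) ?_ ?_ ?_ ?_
  · rintro ⟨a, b⟩ hp
    rw [Finset.mem_filter, Finset.mem_product] at hp ⊢
    obtain ⟨⟨ha, hb⟩, he⟩ := hp
    obtain ⟨c, hc, rfl⟩ := Finset.mem_image.1 hb
    simp only [mul_inv_cancel_right]
    exact ⟨⟨ha, hc⟩, by rw [← he]; group⟩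
  · rintro ⟨a, b⟩ hq
    rw [Finset.mem_filter, Finset.mem_product] at hq ⊢
    refine ⟨⟨hq.1.1, Finset.mem_image_of_mem _ hq.1.2⟩, ?_⟩
    have := hq.2
    simp only at this ⊢
    rw [← mul_assoc, this]; group
  · rintro ⟨a, b⟩ _; simp
  · rintro ⟨a, b⟩ _; simp

lemma card_symmDiff_eq (X Y : Finset Γ) :
    (symmDiff X Y).card = (X \ Y).card + (Y \ X).card := by
  rw [symmDiff_def]
  exact Finset.card_union_of_disjoint (disjoint_sdiff_sdiff)

lemma sum_sdiff_card (U : Finset Γ) (T : ℕ) (p q : Γ → ℕ) (hp : ∀ x ∈ U, p x ≤ T) :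
    ∑ t ∈ Finset.range T,
      ((U.filter (fun x => t < p x)) \ (U.filter (fun x => t < q x))).card
      = ∑ x ∈ U, (p x - q x) := by
  have h1 : ∀ t : ℕ, (U.filter (fun x => t < p x)) \ (U.filter (fun x => t < q x))
      = U.filter (fun x => t < p x ∧ ¬ t < q x) := by
    intro t; ext x
    simp only [Finset.mem_sdiff, Finset.mem_filter]
    tauto
  simp_rw [h1, Finset.card_filter]
  rw [Finset.sum_comm]
  refine Finset.sum_congr rfl fun x hx => ?_
  rw [← Finset.card_filter]
  have h2 : (Finset.range T).filter (fun t => t < p x ∧ ¬ t < q x)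
      = Finset.Ico (q x) (p x) := by
    ext t
    simp only [Finset.mem_filter, Finset.mem_range, Finset.mem_Ico]
    have := hp x hx
    omega
  rw [h2, Nat.card_Ico]

theorem twosided
    (hL : ∀ (K : Finset Γ) (m : ℕ), ∃ A : Finset Γ, A.Nonempty ∧
      ∀ g ∈ K, m * (symmDiff A (A.image (g * ·))).card ≤ A.card)
    (K : Finset Γ) (m : ℕ) :
    ∃ F : Finset Γ, F.Nonempty ∧ ∀ g ∈ K,
      m * (symmDiff F (F.image (g * ·))).card ≤ F.card ∧
      m * (symmDiff F (F.image (· * g))).card ≤ F.card := by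
  classical
  set M := 4 * m * K.card + 1 with hMdef
  obtain ⟨A, hAne, hA⟩ := hL K M
  obtain ⟨C, hCne, hC⟩ := hL (K.image (·⁻¹)) M
  set B := C.image (·⁻¹) with hBdef
  have hBne : B.Nonempty := hCne.image _
  have hB : ∀ g ∈ K, M * (symmDiff B (B.image (· * g))).card ≤ B.card := by
    intro g hg
    have h1 := hC g⁻¹ (Finset.mem_image_of_mem _ hg)
    have h2 : B.image (· * g) = (C.image (g⁻¹ * ·)).image (·⁻¹) := by
      rw [hBdef, Finset.image_image, Finset.image_image]
      apply Finset.image_congr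
      intro c _
      simp [Function.comp]
    have h3 : symmDiff B (B.image (· * g))
        = (symmDiff C (C.image (g⁻¹ * ·))).image (·⁻¹) := by
      rw [h2, hBdef, Finset.image_symmDiff _ _ inv_injective]
    rw [h3, Finset.card_image_of_injective _ inv_injective, hBdef,
      Finset.card_image_of_injective _ inv_injective]
    exact h1
  set E : Finset Γ := insert 1 K with hEdef
  set S := A * B with hSdef
  set U := E * S * E with hUdef
  have h1E : (1 : Γ) ∈ E := Finset.mem_insert_self _ _
  have hKE : ∀ g ∈ K, g ∈ E := fun g hg => Finset.mem_insert_of_mem hg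
  have hSU : S ⊆ U := by
    intro x hx
    have := Finset.mul_mem_mul (Finset.mul_mem_mul h1E hx) h1E
    simpa using this
  have hgU : ∀ g ∈ K, ∀ x ∈ S, g * x ∈ U := by
    intro g hg x hx
    have := Finset.mul_mem_mul (Finset.mul_mem_mul (hKE g hg) hx) h1E
    simpa using this
  have hxgU : ∀ g ∈ K, ∀ x ∈ S, x * g ∈ U := by
    intro g hg x hx
    have := Finset.mul_mem_mul (Finset.mul_mem_mul h1E hx) (hKE g hg)
    simpa using this
  set T := A.card * B.card with hTdef
  set φ : Γ → ℕ := cv A B with hφdef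
  set Ft : ℕ → Finset Γ := fun t => U.filter (fun x => t < φ x) with hFtdef
  have hφT : ∀ x, φ x ≤ T := fun x => cv_le A B x
  have hφS : ∀ x, 0 < φ x → x ∈ S := fun x h => mem_of_cv_pos h
  have himgL : ∀ g ∈ K, ∀ t, (Ft t).image (g * ·)
      = U.filter (fun x => t < φ (g⁻¹ * x)) := by
    intro g hg t
    ext x
    simp only [hFtdef, Finset.mem_image, Finset.mem_filter]
    constructor
    · rintro ⟨y, ⟨hyU, hyφ⟩, rfl⟩
      refine ⟨hgU g hg y (hφS y (Nat.lt_of_le_of_lt (Nat.zero_le t) hyφ)), ?_⟩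
      simpa using hyφ
    · rintro ⟨hxU, hxφ⟩
      have hmem : g⁻¹ * x ∈ S := hφS _ (Nat.lt_of_le_of_lt (Nat.zero_le t) hxφ)
      exact ⟨g⁻¹ * x, ⟨hSU hmem, hxφ⟩, by group⟩
  have himgR : ∀ g ∈ K, ∀ t, (Ft t).image (· * g)
      = U.filter (fun x => t < φ (x * g⁻¹)) := by
    intro g hg t
    ext x
    simp only [hFtdef, Finset.mem_image, Finset.mem_filter]
    constructor
    · rintro ⟨y, ⟨hyU, hyφ⟩, rfl⟩
      refine ⟨hxgU g hg y (hφS y (Nat.lt_of_le_of_lt (Nat.zero_le t) hyφ)), ?_⟩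
      simpa using hyφ
    · rintro ⟨hxU, hxφ⟩
      have hmem : x * g⁻¹ ∈ S := hφS _ (Nat.lt_of_le_of_lt (Nat.zero_le t) hxφ)
      exact ⟨x * g⁻¹, ⟨hSU hmem, hxφ⟩, by group⟩
  -- left estimate
  have hL1 : ∀ g ∈ K, ∑ t ∈ Finset.range T, (symmDiff (Ft t) ((Ft t).image (g * ·))).card
      ≤ (symmDiff A (A.image (g * ·))).card * B.card := by
    intro g hg
    set gA := A.image (g * ·) with hgAdef
    have hψ : ∀ x, φ (g⁻¹ * x) = cv gA B x := fun x => (cv_image_left g A B x).symm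
    have hsplit : A ⊆ (A ∩ gA) ∪ (A \ gA) := by
      intro a ha
      by_cases h : a ∈ gA <;> simp [ha, h]
    have hsplit2 : gA ⊆ (A ∩ gA) ∪ (gA \ A) := by
      intro a ha
      by_cases h : a ∈ A <;> simp [ha, h]
    have hq1 : ∀ x, φ x - cv gA B x ≤ cv (A \ gA) B x := by
      intro x
      have e1 : φ x ≤ cv (A ∩ gA) B x + cv (A \ gA) B x :=
        le_trans (cv_mono B hsplit x) (cv_union_le _ _ _ _)
      have e2 : cv (A ∩ gA) B x ≤ cv gA B x := cv_mono B Finset.inter_subset_right x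
      omega
    have hq2 : ∀ x, cv gA B x - φ x ≤ cv (gA \ A) B x := by
      intro x
      have e1 : cv gA B x ≤ cv (A ∩ gA) B x + cv (gA \ A) B x :=
        le_trans (cv_mono B hsplit2 x) (cv_union_le _ _ _ _)
      have e2 : cv (A ∩ gA) B x ≤ φ x := cv_mono B Finset.inter_subset_left x
      omega
    have hcvT : ∀ x ∈ U, cv gA B x ≤ T := by
      intro x _
      exact le_trans (cv_le _ _ _) (Nat.mul_le_mul_right _ (Finset.card_image_le))
    calc
      ∑ t ∈ Finset.range T, (symmDiff (Ft t) ((Ft t).image (g * ·))).card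
        = ∑ t ∈ Finset.range T,
            ((Ft t \ (Ft t).image (g * ·)).card + ((Ft t).image (g * ·) \ Ft t).card) :=
          Finset.sum_congr rfl fun t _ => card_symmDiff_eq _ _
      _ = (∑ t ∈ Finset.range T, (Ft t \ (Ft t).image (g * ·)).card)
          + ∑ t ∈ Finset.range T, ((Ft t).image (g * ·) \ Ft t).card :=
          Finset.sum_add_distrib
      _ = (∑ x ∈ U, (φ x - cv gA B x)) + ∑ x ∈ U, (cv gA B x - φ x) := by
          have e1 : ∀ t, (Ft t).image (g * ·) = U.filter (fun x => t < cv gA B x) := by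
            intro t; rw [himgL g hg t]; simp_rw [hψ]
          simp_rw [e1]
          rw [sum_sdiff_card U T φ (fun x => cv gA B x) (fun x _ => hφT x),
            sum_sdiff_card U T (fun x => cv gA B x) φ hcvT]
      _ ≤ (∑ x ∈ U, cv (A \ gA) B x) + ∑ x ∈ U, cv (gA \ A) B x := by
          gcongr with x hx x hx
          · exact hq1 x
          · exact hq2 x
      _ = (A \ gA).card * B.card + (gA \ A).card * B.card := by
          rw [sum_cv (le_trans (Finset.mul_subset_mul_right Finset.sdiff_subset) hSU),
            sum_cv ?_]
          · intro z hz
            rw [Finset.mem_mul] at hz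
            obtain ⟨u, hu, b, hb, rfl⟩ := hz
            obtain ⟨a, ha, rfl⟩ := Finset.mem_image.1 (Finset.sdiff_subset hu)
            have : a * b ∈ S := Finset.mul_mem_mul ha hb
            have := hgU g hg _ this
            simpa [mul_assoc] using this
      _ = (symmDiff A gA).card * B.card := by rw [card_symmDiff_eq, add_mul]
  -- right estimate
  have hR1 : ∀ g ∈ K, ∑ t ∈ Finset.range T, (symmDiff (Ft t) ((Ft t).image (· * g))).card
      ≤ A.card * (symmDiff B (B.image (· * g))).card := by
    intro g hg
    set Bg := B.image (· * g) with hBgdef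
    have hψ : ∀ x, φ (x * g⁻¹) = cv A Bg x := fun x => (cv_image_right g A B x).symm
    have hsplit : B ⊆ (B ∩ Bg) ∪ (B \ Bg) := by
      intro a ha
      by_cases h : a ∈ Bg <;> simp [ha, h]
    have hsplit2 : Bg ⊆ (B ∩ Bg) ∪ (Bg \ B) := by
      intro a ha
      by_cases h : a ∈ B <;> simp [ha, h]
    have hq1 : ∀ x, φ x - cv A Bg x ≤ cv A (B \ Bg) x := by
      intro x
      have e1 : φ x ≤ cv A (B ∩ Bg) x + cv A (B \ Bg) x :=
        le_trans (cv_mono_right A hsplit x) (cv_union_le_right _ _ _ _)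
      have e2 : cv A (B ∩ Bg) x ≤ cv A Bg x := cv_mono_right A Finset.inter_subset_right x
      omega
    have hq2 : ∀ x, cv A Bg x - φ x ≤ cv A (Bg \ B) x := by
      intro x
      have e1 : cv A Bg x ≤ cv A (B ∩ Bg) x + cv A (Bg \ B) x :=
        le_trans (cv_mono_right A hsplit2 x) (cv_union_le_right _ _ _ _)
      have e2 : cv A (B ∩ Bg) x ≤ φ x := cv_mono_right A Finset.inter_subset_left x
      omega
    have hcvT : ∀ x ∈ U, cv A Bg x ≤ T := by
      intro x _
      exact le_trans (cv_le _ _ _) (Nat.mul_le_mul_left _ (Finset.card_image_le))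
    calc
      ∑ t ∈ Finset.range T, (symmDiff (Ft t) ((Ft t).image (· * g))).card
        = ∑ t ∈ Finset.range T,
            ((Ft t \ (Ft t).image (· * g)).card + ((Ft t).image (· * g) \ Ft t).card) :=
          Finset.sum_congr rfl fun t _ => card_symmDiff_eq _ _
      _ = (∑ t ∈ Finset.range T, (Ft t \ (Ft t).image (· * g)).card)
          + ∑ t ∈ Finset.range T, ((Ft t).image (· * g) \ Ft t).card :=
          Finset.sum_add_distrib
      _ = (∑ x ∈ U, (φ x - cv A Bg x)) + ∑ x ∈ U, (cv A Bg x - φ x) := by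
          have e1 : ∀ t, (Ft t).image (· * g) = U.filter (fun x => t < cv A Bg x) := by
            intro t; rw [himgR g hg t]; simp_rw [hψ]
          simp_rw [e1]
          rw [sum_sdiff_card U T φ (fun x => cv A Bg x) (fun x _ => hφT x),
            sum_sdiff_card U T (fun x => cv A Bg x) φ hcvT]
      _ ≤ (∑ x ∈ U, cv A (B \ Bg) x) + ∑ x ∈ U, cv A (Bg \ B) x := by
          gcongr with x hx x hx
          · exact hq1 x
          · exact hq2 x
      _ = A.card * (B \ Bg).card + A.card * (Bg \ B).card := by
          rw [sum_cv (le_trans (Finset.mul_subset_mul_left Finset.sdiff_subset) hSU),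
            sum_cv ?_]
          · intro z hz
            rw [Finset.mem_mul] at hz
            obtain ⟨a, ha, u, hu, rfl⟩ := hz
            obtain ⟨b, hb, rfl⟩ := Finset.mem_image.1 (Finset.sdiff_subset hu)
            have : a * b ∈ S := Finset.mul_mem_mul ha hb
            have := hxgU g hg _ this
            simpa [mul_assoc] using this
      _ = A.card * (symmDiff B Bg).card := by rw [card_symmDiff_eq, mul_add]
  -- total mass
  have hsumF : ∑ t ∈ Finset.range T, (Ft t).card = A.card * B.card := by
    have h0 : ∀ t : ℕ, Ft t = Ft t \ (U.filter (fun x => t < (fun _ : Γ => 0) x)) := by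
      intro t
      simp [hFtdef]
    calc ∑ t ∈ Finset.range T, (Ft t).card
        = ∑ t ∈ Finset.range T,
            ((U.filter (fun x => t < φ x)) \ (U.filter (fun x => t < (fun _ : Γ => 0) x))).card := by
          refine Finset.sum_congr rfl fun t _ => ?_
          rw [← h0 t]
      _ = ∑ x ∈ U, (φ x - 0) := sum_sdiff_card U T φ _ (fun x _ => hφT x)
      _ = A.card * B.card := by
          simp only [Nat.sub_zero]
          exact sum_cv hSU
  -- aggregation
  set cost : ℕ → ℕ := fun t => ∑ g ∈ K,
    ((symmDiff (Ft t) ((Ft t).image (g * ·))).card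
      + (symmDiff (Ft t) ((Ft t).image (· * g))).card) with hcostdef
  set W := ∑ t ∈ Finset.range T, cost t with hWdef
  have hWR : W ≤ ∑ g ∈ K, ((symmDiff A (A.image (g * ·))).card * B.card
      + A.card * (symmDiff B (B.image (· * g))).card) := by
    rw [hWdef]
    simp_rw [hcostdef]
    rw [Finset.sum_comm]
    refine Finset.sum_le_sum fun g hg => ?_
    rw [Finset.sum_add_distrib]
    exact Nat.add_le_add (hL1 g hg) (hR1 g hg)
  have hMR : M * ∑ g ∈ K, ((symmDiff A (A.image (g * ·))).card * B.card
      + A.card * (symmDiff B (B.image (· * g))).card)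
      ≤ K.card * (2 * (A.card * B.card)) := by
    rw [Finset.mul_sum]
    calc ∑ g ∈ K, M * ((symmDiff A (A.image (g * ·))).card * B.card
          + A.card * (symmDiff B (B.image (· * g))).card)
        ≤ ∑ g ∈ K, 2 * (A.card * B.card) := by
          refine Finset.sum_le_sum fun g hg => ?_
          have e1 := hA g hg
          have e2 := hB g hg
          calc M * ((symmDiff A (A.image (g * ·))).card * B.card
              + A.card * (symmDiff B (B.image (· * g))).card)
              = (M * (symmDiff A (A.image (g * ·))).card) * B.card
                + A.card * (M * (symmDiff B (B.image (· * g))).card) := by ring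
            _ ≤ A.card * B.card + A.card * B.card :=
                Nat.add_le_add (Nat.mul_le_mul_right _ e1) (Nat.mul_le_mul_left _ e2)
            _ = 2 * (A.card * B.card) := by ring
      _ = K.card * (2 * (A.card * B.card)) := by
          rw [Finset.sum_const, smul_eq_mul]
  have hcancel : m * W + m * W ≤ A.card * B.card := by
    have h1 : M * (m * W + m * W) ≤ M * (A.card * B.card) := by
      calc M * (m * W + m * W) = (2 * m) * (M * W) := by ring
        _ ≤ (2 * m) * (K.card * (2 * (A.card * B.card))) :=
            Nat.mul_le_mul_left _ (le_trans (Nat.mul_le_mul_left _ hWR) hMR)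
        _ = (4 * m * K.card) * (A.card * B.card) := by ring
        _ ≤ M * (A.card * B.card) := Nat.mul_le_mul_right _ (by omega)
    exact Nat.le_of_mul_le_mul_left h1 (by omega)
  have hABpos : 0 < A.card * B.card :=
    Nat.mul_pos (Finset.card_pos.2 hAne) (Finset.card_pos.2 hBne)
  -- pigeonhole
  have key : ∃ t ∈ Finset.range T, (Ft t).Nonempty ∧ m * cost t ≤ (Ft t).card := by
    by_contra hcon
    push_neg at hcon
    have hle : ∀ t ∈ Finset.range T, (Ft t).card ≤ m * cost t := by
      intro t ht
      rcases (Ft t).eq_empty_or_nonempty with he | hne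
      · simp [he]
      · exact le_of_lt (hcon t ht hne)
    have h2 : A.card * B.card ≤ m * W := by
      rw [← hsumF, hWdef, Finset.mul_sum]
      exact Finset.sum_le_sum hle
    have := hcancel
    set x := m * W
    omega
  obtain ⟨t, _, hne, hcost⟩ := key
  refine ⟨Ft t, hne, fun g hg => ?_⟩
  have h1 : (symmDiff (Ft t) ((Ft t).image (g * ·))).card
      + (symmDiff (Ft t) ((Ft t).image (· * g))).card ≤ cost t :=
    Finset.single_le_sum (f := fun g => (symmDiff (Ft t) ((Ft t).image (g * ·))).card
      + (symmDiff (Ft t) ((Ft t).image (· * g))).card) (fun _ _ => Nat.zero_le _) hg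
  constructor
  · exact le_trans (Nat.mul_le_mul_left m (by omega)) hcost
  · exact le_trans (Nat.mul_le_mul_left m (by omega)) hcost

end FolnerAux

namespace FolnerAux

section CompToolkit
variable {α β σ : Type*} [Primcodable α] [Primcodable β] [Primcodable σ]

theorem clist_foldl {f : α → List β} {g : α → σ} {h : α → σ × β → σ}
    (hf : Computable f) (hg : Computable g) (hh : Computable₂ h) :
    Computable fun a => (f a).foldl (fun s b => h a (s, b)) (g a) := by
  have huncur : Computable (fun q : α × ℕ × σ =>
      Option.casesOn (motive := fun _ => σ) ((f q.1)[q.2.1]?) q.2.2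
        (fun b => h q.1 (q.2.2, b))) := by
    apply Computable.option_casesOn
      (o := fun q : α × ℕ × σ => (f q.1)[q.2.1]?)
      (f := fun q : α × ℕ × σ => q.2.2)
      (g := fun (q : α × ℕ × σ) b => h q.1 (q.2.2, b))
    · exact (Primrec.list_getElem?.to_comp).comp (hf.comp Computable.fst)
        (Computable.fst.comp Computable.snd)
    · exact Computable.snd.comp Computable.snd
    · exact hh.comp (Computable.fst.comp Computable.fst)
        (Computable.pair
          ((Computable.snd.comp Computable.snd).comp Computable.fst) Computable.snd)
  have hstep : Computable₂ (fun (a : α) (p : ℕ × σ) =>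
      Option.casesOn (motive := fun _ => σ) ((f a)[p.1]?) p.2 (fun b => h a (p.2, b))) :=
    huncur
  have H := Computable.nat_rec (f := fun a => (f a).length) (g := g)
      (h := fun a (p : ℕ × σ) =>
        Option.casesOn (motive := fun _ => σ) ((f a)[p.1]?) p.2 (fun b => h a (p.2, b)))
      ((Primrec.list_length.to_comp).comp hf) hg hstep
  refine H.of_eq fun a => ?_
  suffices h' : ∀ n : ℕ, (Nat.rec (motive := fun _ => σ) (g a)
      (fun y IH => Option.casesOn (motive := fun _ => σ) ((f a)[y]?) IH (fun b => h a (IH, b))) n)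
      = ((f a).take n).foldl (fun s b => h a (s, b)) (g a) by
    rw [h' ((f a).length), List.take_length]
  intro n
  induction n with
  | zero => simp
  | succ n ih =>
    rw [List.take_succ]
    cases hgn : (f a)[n]? <;>
      simp [List.foldl_append, hgn, ih]

theorem clist_map {f : α → List β} {g : α → β → σ}
    (hf : Computable f) (hg : Computable₂ g) :
    Computable fun a => (f a).map (g a) := by
  have key : ∀ (l : List β) (a : α) (s : List σ),
      l.foldl (fun s b => s ++ [g a b]) s = s ++ l.map (g a) := by
    intro l
    induction l with
    | nil => simp
    | cons b l ih => intro a s; simp [ih]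
  have H := clist_foldl (g := fun _ : α => ([] : List σ))
      (h := fun a (p : List σ × β) => p.1 ++ [g a p.2]) hf (Computable.const [])
      ((Primrec.list_concat.to_comp).comp (Computable.fst.comp Computable.snd)
        (hg.comp Computable.fst (Computable.snd.comp Computable.snd)))
  refine H.of_eq fun a => ?_
  rw [key]
  simp

end CompToolkit

section Ops
variable {Γ : Type*} [DecidableEq Γ]

/-- membership as primrec predicate -/
theorem mem_primrec [Primcodable Γ] : PrimrecPred fun p : List Γ × Γ => p.2 ∈ p.1 := by
  have h : PrimrecPred fun p : List Γ × Γ => p.1.idxOf p.2 < p.1.length :=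
    Primrec.nat_lt.comp (Primrec.list_idxOf.comp Primrec.snd Primrec.fst)
      (Primrec.list_length.comp Primrec.fst)
  refine PrimrecPred.of_eq h fun p => ?_
  exact List.idxOf_lt_length_iff

/-- dedup via foldl -/
def dd (l : List Γ) : List Γ := l.foldl (fun s b => if b ∈ s then s else s ++ [b]) []

theorem dd_aux (l : List Γ) : ∀ s : List Γ, s.Nodup →
    ((l.foldl (fun s b => if b ∈ s then s else s ++ [b]) s).Nodup ∧
      ∀ x, x ∈ l.foldl (fun s b => if b ∈ s then s else s ++ [b]) s ↔ x ∈ s ∨ x ∈ l) := by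
  induction l with
  | nil => intro s hs; simpa using hs
  | cons b l ih =>
    intro s hs
    by_cases hb : b ∈ s
    · have := ih s hs
      simp only [List.foldl_cons, if_pos hb]
      refine ⟨this.1, fun x => ?_⟩
      rw [this.2 x]
      constructor
      · rintro (h | h)
        · exact Or.inl h
        · exact Or.inr (List.mem_cons_of_mem _ h)
      · rintro (h | h)
        · exact Or.inl h
        · rcases List.mem_cons.1 h with rfl | h
          · exact Or.inl hb
          · exact Or.inr h
    · have hns : (s ++ [b]).Nodup := by
        simp [List.nodup_append, hs, hb]
        exact fun a ha h => hb (h ▸ ha)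
      have := ih (s ++ [b]) hns
      simp only [List.foldl_cons, if_neg hb]
      refine ⟨this.1, fun x => ?_⟩
      rw [this.2 x]
      simp only [List.mem_append, List.mem_singleton, List.mem_cons]
      tauto

theorem dd_nodup (l : List Γ) : (dd l).Nodup := (dd_aux l [] List.nodup_nil).1

theorem mem_dd {l : List Γ} {x : Γ} : x ∈ dd l ↔ x ∈ l := by
  rw [dd, (dd_aux l [] List.nodup_nil).2 x]
  simp

theorem dd_toFinset (l : List Γ) : (dd l).toFinset = l.toFinset := by
  ext x; simp [List.mem_toFinset, mem_dd]

theorem dd_primrec [Primcodable Γ] : Primrec (dd (Γ := Γ)) := by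
  have hstep : Primrec₂ fun (_ : List Γ) (p : List Γ × Γ) =>
      if p.2 ∈ p.1 then p.1 else p.1 ++ [p.2] := by
    refine Primrec.ite ?_ ?_ ?_
    · exact mem_primrec.comp Primrec.snd
    · exact Primrec.fst.comp Primrec.snd
    · exact Primrec.list_concat.comp (Primrec.fst.comp Primrec.snd)
        (Primrec.snd.comp Primrec.snd)
  exact Primrec.list_foldl Primrec.id (Primrec.const []) hstep

/-- the number of distinct elements -/
def cCard (l : List Γ) : ℕ := (dd l).length

theorem cCard_primrec [Primcodable Γ] : Primrec (cCard (Γ := Γ)) :=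
  Primrec.list_length.comp dd_primrec

theorem cCard_eq (l : List Γ) : cCard l = l.toFinset.card := by
  rw [cCard, ← dd_toFinset, List.toFinset_card_of_nodup (dd_nodup l)]

/-- counting fold -/
theorem count_fold (p : Γ → Bool) (l : List Γ) : ∀ n : ℕ,
    l.foldl (fun n b => if p b then n + 1 else n) n = n + l.countP p := by
  induction l with
  | nil => simp
  | cons b l ih =>
    intro n
    by_cases hb : p b <;> simp [List.countP_cons, hb, ih] <;> omega

/-- card of symmetric difference of toFinsets -/
def sdCard (l1 l2 : List Γ) : ℕ :=
  (dd (l1 ++ l2)).foldl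
    (fun n b => if (decide (b ∈ l1) != decide (b ∈ l2)) = true then n + 1 else n) 0

theorem sdCard_primrec [Primcodable Γ] : Primrec₂ (sdCard (Γ := Γ)) := by
  have hstep : Primrec₂ fun (q : List Γ × List Γ) (p : ℕ × Γ) =>
      if (decide (p.2 ∈ q.1) != decide (p.2 ∈ q.2)) = true then p.1 + 1 else p.1 := by
    refine Primrec.ite ?_ ?_ ?_
    · refine PrimrecPred.of_eq (p := fun x : (List Γ × List Γ) × ℕ × Γ =>
        (decide (x.2.2 ∈ x.1.1) != decide (x.2.2 ∈ x.1.2)) = true) ?_ (fun _ => Iff.rfl)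
      have h1 : Primrec fun x : (List Γ × List Γ) × ℕ × Γ => decide (x.2.2 ∈ x.1.1) :=
        (mem_primrec.comp (Primrec.pair (Primrec.fst.comp Primrec.fst)
          (Primrec.snd.comp Primrec.snd))).decide
      have h2 : Primrec fun x : (List Γ × List Γ) × ℕ × Γ => decide (x.2.2 ∈ x.1.2) :=
        (mem_primrec.comp (Primrec.pair (Primrec.snd.comp Primrec.fst)
          (Primrec.snd.comp Primrec.snd))).decide
      have h3 : Primrec fun x : (List Γ × List Γ) × ℕ × Γ =>
          (decide (x.2.2 ∈ x.1.1) != decide (x.2.2 ∈ x.1.2)) :=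
        (Primrec.dom_bool₂ (· != ·)).comp h1 h2
      exact PrimrecPred.of_eq (Primrec.eq.comp h3 (Primrec.const true)) fun x => by simp
    · exact Primrec.succ.comp (Primrec.fst.comp Primrec.snd)
    · exact Primrec.fst.comp Primrec.snd
  have hdd : Primrec fun q : List Γ × List Γ => dd (q.1 ++ q.2) :=
    dd_primrec.comp (Primrec.list_append.comp Primrec.fst Primrec.snd)
  exact Primrec.list_foldl hdd (Primrec.const 0) hstep

theorem sdCard_eq (l1 l2 : List Γ) :
    sdCard l1 l2 = (symmDiff l1.toFinset l2.toFinset).card := by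
  rw [sdCard, count_fold, Nat.zero_add]
  rw [List.countP_eq_length_filter]
  have hnd : (List.filter (fun b => decide (b ∈ l1) != decide (b ∈ l2)) (dd (l1 ++ l2))).Nodup :=
    (dd_nodup _).filter _
  rw [← List.toFinset_card_of_nodup hnd, List.toFinset_filter, dd_toFinset,
    List.toFinset_append]
  congr 1
  ext x
  simp only [Finset.mem_filter, Finset.mem_union, List.mem_toFinset, Finset.mem_symmDiff]
  constructor
  · rintro ⟨h1, h2⟩
    simp only [bne_iff_ne, ne_eq, decide_eq_decide] at h2
    tauto
  · intro h
    simp only [bne_iff_ne, ne_eq, decide_eq_decide]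
    tauto

end Ops
end FolnerAux

namespace FolnerAux
section Checker
variable {Γ : Type*} [Group Γ] [DecidableEq Γ] [Primcodable Γ]

/-- first `j+1` decoded elements -/
def decList (Γ : Type*) [Primcodable Γ] (j : ℕ) : List Γ :=
  (List.range (j + 1)).foldl
    (fun s n => Option.casesOn (motive := fun _ => List Γ)
      (Encodable.decode (α := Γ) n) s (fun b => s ++ [b])) []

omit [Group Γ] [DecidableEq Γ] in
theorem decList_aux (l : List ℕ) : ∀ s : List Γ,
    l.foldl (fun s n => Option.casesOn (motive := fun _ => List Γ)
      (Encodable.decode (α := Γ) n) s (fun b => s ++ [b])) s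
    = s ++ l.filterMap (fun n => Encodable.decode (α := Γ) n) := by
  induction l with
  | nil => simp
  | cons n l ih =>
    intro s
    simp only [List.foldl_cons, List.filterMap_cons]
    cases h : Encodable.decode (α := Γ) n <;> simp [h, ih]

omit [Group Γ] [DecidableEq Γ] in
theorem mem_decList {g : Γ} {j : ℕ} (h : Encodable.encode g ≤ j) : g ∈ decList Γ j := by
  rw [decList, decList_aux]
  simp only [List.nil_append, List.mem_filterMap]
  exact ⟨Encodable.encode g, by simp [List.mem_range, Nat.lt_succ_of_le h], Encodable.encodek g⟩

omit [Group Γ] [DecidableEq Γ] in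
theorem decList_primrec : Primrec (decList Γ) := by
  have hstep : Primrec₂ fun (_ : ℕ) (p : List Γ × ℕ) =>
      Option.casesOn (motive := fun _ => List Γ)
        (Encodable.decode (α := Γ) p.2) p.1 (fun b => p.1 ++ [b]) := by
    refine Primrec.option_casesOn (Primrec.decode.comp (Primrec.snd.comp Primrec.snd))
      (Primrec.fst.comp Primrec.snd) ?_
    exact Primrec.list_concat.comp ((Primrec.fst.comp Primrec.snd).comp Primrec.fst)
      Primrec.snd
  exact Primrec.list_foldl (Primrec.list_range.comp Primrec.succ) (Primrec.const []) hstep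

/-- invariance check: `m * |toFinset l ∆ toFinset u| ≤ |toFinset l|` -/
def chk (m : ℕ) (l u : List Γ) : Bool := decide (m * sdCard l u ≤ cCard l)

omit [Group Γ] in
theorem chk_eq (m : ℕ) (l u : List Γ) :
    chk m l u = true ↔ m * (symmDiff l.toFinset u.toFinset).card ≤ l.toFinset.card := by
  rw [chk, decide_eq_true_iff, sdCard_eq, cCard_eq]

/-- the full checker, with products precomputed:
`P1` is the list of pairs `(l.map (g * ·), l.map (· * g))` for `g ∈ decList j`,
`P2` is the list of `l.map (y * ·)` for `y ∈ hist.flatten`. -/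
def okB (j : ℕ) (hist : List (List Γ)) (l : List Γ)
    (P1 : List (List Γ × List Γ)) (P2 : List (List Γ)) : Bool :=
  (!l.isEmpty) &&
    (P1.foldl (fun s uv => s && (chk (j + 1) l uv.1 && chk (j + 1) l uv.2)) true) &&
    (P2.foldl (fun s u => s && chk (hist.flatten.length + 1) l u) true)

omit [Group Γ] [DecidableEq Γ] in
theorem band_foldl {X : Type*} (p : X → Bool) (P : List X) : ∀ s : Bool,
    P.foldl (fun s x => s && p x) s = (s && P.all p) := by
  induction P with
  | nil => simp
  | cons x P ih => intro s; simp [ih, Bool.and_assoc]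

omit [Group Γ] in
theorem okB_eq (j : ℕ) (hist : List (List Γ)) (l : List Γ) (P1 : List (List Γ × List Γ))
    (P2 : List (List Γ)) :
    okB j hist l P1 P2 = true ↔
      l ≠ [] ∧ (∀ uv ∈ P1, chk (j + 1) l uv.1 = true ∧ chk (j + 1) l uv.2 = true) ∧
        ∀ u ∈ P2, chk (hist.flatten.length + 1) l u = true := by
  have hne : (!l.isEmpty) = true ↔ l ≠ [] := by cases l <;> simp
  rw [okB, band_foldl, band_foldl]
  simp only [Bool.and_eq_true, Bool.true_and, List.all_eq_true, hne]
  constructor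
  · rintro ⟨⟨h1, h2⟩, h3⟩
    refine ⟨h1, fun uv huv => by simpa using h2 uv huv, h3⟩
  · rintro ⟨h1, h2, h3⟩
    exact ⟨⟨h1, fun uv huv => by simpa using h2 uv huv⟩, h3⟩

end Checker

end FolnerAux

namespace FolnerAux
section Checker2
variable {Γ : Type*} [Group Γ] [DecidableEq Γ] [Primcodable Γ]

omit [Group Γ] in
theorem list_toFinset_map (l : List Γ) (f : Γ → Γ) :
    (l.map f).toFinset = l.toFinset.image f := by
  ext x
  simp [List.mem_toFinset, Finset.mem_image, List.mem_map]

omit [Group Γ] in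
theorem chk_primrec : Primrec fun q : (ℕ × List Γ) × List Γ => chk q.1.1 q.1.2 q.2 := by
  have h1 : Primrec fun q : (ℕ × List Γ) × List Γ => q.1.1 * sdCard q.1.2 q.2 :=
    Primrec.nat_mul.comp (Primrec.fst.comp Primrec.fst)
      (sdCard_primrec.comp (Primrec.snd.comp Primrec.fst) Primrec.snd)
  have h2 : Primrec fun q : (ℕ × List Γ) × List Γ => cCard q.1.2 :=
    cCard_primrec.comp (Primrec.snd.comp Primrec.fst)
  exact (PrimrecPred.of_eq (Primrec.nat_le.comp h1 h2) fun q => Iff.rfl).decide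

omit [Group Γ] in
theorem okB_primrec : Primrec fun q :
    ((ℕ × List (List Γ)) × List Γ) × List (List Γ × List Γ) × List (List Γ) =>
    okB q.1.1.1 q.1.1.2 q.1.2 q.2.1 q.2.2 := by
  have hj : Primrec fun q : ((ℕ × List (List Γ)) × List Γ) ×
      List (List Γ × List Γ) × List (List Γ) => q.1.1.1 :=
    Primrec.fst.comp (Primrec.fst.comp Primrec.fst)
  have hhist : Primrec fun q : ((ℕ × List (List Γ)) × List Γ) ×
      List (List Γ × List Γ) × List (List Γ) => q.1.1.2 :=
    Primrec.snd.comp (Primrec.fst.comp Primrec.fst)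
  have hl : Primrec fun q : ((ℕ × List (List Γ)) × List Γ) ×
      List (List Γ × List Γ) × List (List Γ) => q.1.2 :=
    Primrec.snd.comp Primrec.fst
  have hP1 : Primrec fun q : ((ℕ × List (List Γ)) × List Γ) ×
      List (List Γ × List Γ) × List (List Γ) => q.2.1 :=
    Primrec.fst.comp Primrec.snd
  have hP2 : Primrec fun q : ((ℕ × List (List Γ)) × List Γ) ×
      List (List Γ × List Γ) × List (List Γ) => q.2.2 :=
    Primrec.snd.comp Primrec.snd
  have hNE : Primrec fun q : ((ℕ × List (List Γ)) × List Γ) ×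
      List (List Γ × List Γ) × List (List Γ) => !q.1.2.isEmpty := by
    have h0 : Primrec fun q : ((ℕ × List (List Γ)) × List Γ) ×
        List (List Γ × List Γ) × List (List Γ) => decide (0 < q.1.2.length) :=
      (Primrec.nat_lt.comp (Primrec.const 0) (Primrec.list_length.comp hl)).decide
    refine h0.of_eq fun q => ?_
    rcases q with ⟨⟨⟨j, hist⟩, l⟩, P1, P2⟩
    cases l <;> simp
  have hstep1 : Primrec₂ fun (q : ((ℕ × List (List Γ)) × List Γ) ×
      List (List Γ × List Γ) × List (List Γ)) (p : Bool × (List Γ × List Γ)) =>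
      p.1 && (chk (q.1.1.1 + 1) q.1.2 p.2.1 && chk (q.1.1.1 + 1) q.1.2 p.2.2) := by
    have c1 : Primrec fun p : (((ℕ × List (List Γ)) × List Γ) ×
        List (List Γ × List Γ) × List (List Γ)) × Bool × (List Γ × List Γ) =>
        chk (p.1.1.1.1 + 1) p.1.1.2 p.2.2.1 :=
      (chk_primrec.comp (Primrec.pair (Primrec.pair
        (Primrec.succ.comp (hj.comp Primrec.fst)) (hl.comp Primrec.fst))
        (Primrec.fst.comp (Primrec.snd.comp Primrec.snd)))).of_eq fun p => rfl
    have c2 : Primrec fun p : (((ℕ × List (List Γ)) × List Γ) ×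
        List (List Γ × List Γ) × List (List Γ)) × Bool × (List Γ × List Γ) =>
        chk (p.1.1.1.1 + 1) p.1.1.2 p.2.2.2 :=
      (chk_primrec.comp (Primrec.pair (Primrec.pair
        (Primrec.succ.comp (hj.comp Primrec.fst)) (hl.comp Primrec.fst))
        (Primrec.snd.comp (Primrec.snd.comp Primrec.snd)))).of_eq fun p => rfl
    exact (Primrec.dom_bool₂ (· && ·)).comp (Primrec.fst.comp Primrec.snd)
      ((Primrec.dom_bool₂ (· && ·)).comp c1 c2)
  have hfold1 := Primrec.list_foldl hP1 (Primrec.const true) hstep1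
  have hstep2 : Primrec₂ fun (q : ((ℕ × List (List Γ)) × List Γ) ×
      List (List Γ × List Γ) × List (List Γ)) (p : Bool × List Γ) =>
      p.1 && chk (q.1.1.2.flatten.length + 1) q.1.2 p.2 := by
    have c1 : Primrec fun p : (((ℕ × List (List Γ)) × List Γ) ×
        List (List Γ × List Γ) × List (List Γ)) × Bool × List Γ =>
        chk (p.1.1.1.2.flatten.length + 1) p.1.1.2 p.2.2 :=
      (chk_primrec.comp (Primrec.pair (Primrec.pair
        (Primrec.succ.comp (Primrec.list_length.comp
          (Primrec.list_flatten.comp (hhist.comp Primrec.fst))))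
        (hl.comp Primrec.fst)) (Primrec.snd.comp Primrec.snd))).of_eq fun p => rfl
    exact (Primrec.dom_bool₂ (· && ·)).comp (Primrec.fst.comp Primrec.snd) c1
  have hfold2 := Primrec.list_foldl hP2 (Primrec.const true) hstep2
  have := (Primrec.dom_bool₂ (· && ·)).comp
    ((Primrec.dom_bool₂ (· && ·)).comp hNE hfold1) hfold2
  exact this.of_eq fun q => rfl

/-- the candidate checker at stage `j` with history `hist` -/
def okFun : (ℕ × List (List Γ)) → List Γ → Bool := fun x l =>
  okB x.1 x.2 l ((decList Γ x.1).map fun g => (l.map (g * ·), l.map (· * g)))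
    (x.2.flatten.map fun y => l.map (y * ·))

theorem okFun_computable (hmul : Computable fun p : Γ × Γ => p.1 * p.2) :
    Computable₂ (okFun (Γ := Γ)) := by
  have hmul₂ : Computable₂ fun a b : Γ => a * b := hmul
  have hP1 : Computable fun q : (ℕ × List (List Γ)) × List Γ =>
      ((decList Γ q.1.1).map fun g => (q.2.map (g * ·), q.2.map (· * g))) := by
    refine clist_map (f := fun q : (ℕ × List (List Γ)) × List Γ => decList Γ q.1.1)
      (g := fun q g => (q.2.map (g * ·), q.2.map (· * g)))
      ((decList_primrec.comp (Primrec.fst.comp Primrec.fst)).to_comp) ?_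
    refine Computable.pair ?_ ?_
    · exact clist_map (f := fun p : ((ℕ × List (List Γ)) × List Γ) × Γ => p.1.2)
        (g := fun p x => p.2 * x)
        (Computable.snd.comp Computable.fst)
        (hmul₂.comp (Computable.snd.comp Computable.fst) Computable.snd)
    · exact clist_map (f := fun p : ((ℕ × List (List Γ)) × List Γ) × Γ => p.1.2)
        (g := fun p x => x * p.2)
        (Computable.snd.comp Computable.fst)
        (hmul₂.comp Computable.snd (Computable.snd.comp Computable.fst))
  have hP2 : Computable fun q : (ℕ × List (List Γ)) × List Γ =>
      (q.1.2.flatten.map fun y => q.2.map (y * ·)) := by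
    refine clist_map (f := fun q : (ℕ × List (List Γ)) × List Γ => q.1.2.flatten)
      (g := fun q y => q.2.map (y * ·))
      ((Primrec.list_flatten.comp (Primrec.snd.comp Primrec.fst)).to_comp) ?_
    exact clist_map (f := fun p : ((ℕ × List (List Γ)) × List Γ) × Γ => p.1.2)
      (g := fun p x => p.2 * x)
      (Computable.snd.comp Computable.fst)
      (hmul₂.comp (Computable.snd.comp Computable.fst) Computable.snd)
  have H := (okB_primrec (Γ := Γ)).to_comp.comp
    (Computable.pair Computable.id (Computable.pair hP1 hP2))
  exact H.of_eq fun q => rfl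

theorem okFun_spec (x : ℕ × List (List Γ)) (l : List Γ) :
    okFun x l = true ↔
      l ≠ [] ∧
      (∀ g ∈ decList Γ x.1,
        (x.1 + 1) * (symmDiff l.toFinset (l.toFinset.image (g * ·))).card ≤ l.toFinset.card ∧
        (x.1 + 1) * (symmDiff l.toFinset (l.toFinset.image (· * g))).card ≤ l.toFinset.card) ∧
      ∀ y ∈ x.2.flatten,
        (x.2.flatten.length + 1) * (symmDiff l.toFinset (l.toFinset.image (y * ·))).card
          ≤ l.toFinset.card := by
  rw [okFun, okB_eq]
  constructor
  · rintro ⟨h1, h2, h3⟩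
    refine ⟨h1, fun g hg => ?_, fun y hy => ?_⟩
    · have := h2 (l.map (g * ·), l.map (· * g)) (List.mem_map.2 ⟨g, hg, rfl⟩)
      rw [chk_eq, chk_eq, list_toFinset_map, list_toFinset_map] at this
      exact this
    · have := h3 (l.map (y * ·)) (List.mem_map.2 ⟨y, hy, rfl⟩)
      rw [chk_eq, list_toFinset_map] at this
      exact this
  · rintro ⟨h1, h2, h3⟩
    refine ⟨h1, fun uv huv => ?_, fun u hu => ?_⟩
    · obtain ⟨g, hg, rfl⟩ := List.mem_map.1 huv
      rw [chk_eq, chk_eq, list_toFinset_map, list_toFinset_map]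
      exact h2 g hg
    · obtain ⟨y, hy, rfl⟩ := List.mem_map.1 hu
      rw [chk_eq, list_toFinset_map]
      exact h3 y hy

end Checker2
end FolnerAux

namespace FolnerAux
section Search
variable {Γ : Type*} [DecidableEq Γ] [Primcodable Γ]
variable {α : Type*} [Primcodable α]

/-- least-code search for a list passing the checker -/
def searchPart (ok : α → List Γ → Bool) : α →. List Γ := fun a =>
  Nat.rfindOpt fun n => (Encodable.decode (α := List Γ) n).bind
    fun l => bif ok a l then some l else none

theorem searchPart_partrec {ok : α → List Γ → Bool} (hok : Computable₂ ok) :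
    Partrec (searchPart ok) := by
  refine Partrec.rfindOpt ?_
  refine Computable.option_bind (Computable.decode.comp Computable.snd) ?_
  exact Computable.cond (hok.comp (Computable.fst.comp Computable.fst) Computable.snd)
    (Computable.option_some.comp Computable.snd) (Computable.const none)

theorem searchPart_dom {ok : α → List Γ → Bool} {a : α} (h : ∃ l, ok a l = true) :
    (searchPart ok a).Dom := by
  rw [searchPart, Nat.rfindOpt_dom]
  obtain ⟨l, hl⟩ := h
  refine ⟨Encodable.encode l, l, ?_⟩
  simp [Encodable.encodek, hl]

theorem searchPart_spec {ok : α → List Γ → Bool} {a : α} {l : List Γ}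
    (h : l ∈ searchPart ok a) : ok a l = true := by
  obtain ⟨n, hn⟩ := Nat.rfindOpt_spec h
  rcases hd : (Encodable.decode (α := List Γ) n) with _ | l'
  · rw [Option.mem_def, hd] at hn
    simp at hn
  · rw [Option.mem_def, hd] at hn
    rcases hok : ok a l' with _ | _ <;> simp [hok] at hn
    exact hn ▸ hok

end Search
end FolnerAux

namespace FolnerAux
section Assembly
open Filter
variable {Γ : Type*} [Group Γ] [DecidableEq Γ] [Primcodable Γ]

omit [DecidableEq Γ] [Primcodable Γ] in
theorem tendsto_of_bound (c d : ℕ → ℕ) (hc : ∀ n, 0 < c n)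
    (hbound : ∀ᶠ n in atTop, (n + 1) * d n ≤ c n) :
    Tendsto (fun n => (d n : ℝ) / c n) atTop (nhds 0) := by
  refine tendsto_of_tendsto_of_tendsto_of_le_of_le' tendsto_const_nhds
    tendsto_one_div_add_atTop_nhds_zero_nat ?_ ?_
  · exact Eventually.of_forall fun n => by positivity
  · refine hbound.mono fun n hn => ?_
    have hcpos : (0 : ℝ) < (c n : ℝ) := by exact_mod_cast hc n
    have hnn : (0 : ℝ) < (n : ℝ) + 1 := by positivity
    rw [div_le_div_iff₀ hcpos hnn, one_mul]
    calc (d n : ℝ) * ((n : ℝ) + 1) = (((n + 1) * d n : ℕ) : ℝ) := by push_cast; ring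
      _ ≤ (c n : ℝ) := by exact_mod_cast hn

omit [Primcodable Γ] in
theorem leftCond (F : ℕ → Finset Γ) (hne : ∀ n, (F n).Nonempty)
    (hconv : ∀ g : Γ, Tendsto
      (fun n => ((symmDiff (F n) ((F n).image (g * ·))).card : ℝ) / (F n).card)
      atTop (nhds 0)) :
    ∀ (K : Finset Γ) (m : ℕ), ∃ A : Finset Γ, A.Nonempty ∧
      ∀ g ∈ K, m * (symmDiff A (A.image (g * ·))).card ≤ A.card := by
  intro K m
  have hev : ∀ᶠ n in atTop, ∀ g ∈ K,
      ((symmDiff (F n) ((F n).image (g * ·))).card : ℝ) / (F n).card < 1 / (m + 1) := by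
    rw [eventually_all_finset]
    intro g _
    exact (hconv g).eventually (gt_mem_nhds (by positivity))
  obtain ⟨n, hn⟩ := hev.exists
  refine ⟨F n, hne n, fun g hg => ?_⟩
  have h1 := hn g hg
  have hcpos : (0 : ℝ) < ((F n).card : ℝ) := by
    exact_mod_cast Finset.card_pos.2 (hne n)
  rw [div_lt_div_iff₀ hcpos (by positivity), one_mul] at h1
  have h2 : ((m + 1) * (symmDiff (F n) ((F n).image (g * ·))).card : ℕ) < (F n).card := by
    exact_mod_cast (by push_cast at h1 ⊢; nlinarith : (((m + 1) *
      (symmDiff (F n) ((F n).image (g * ·))).card : ℕ) : ℝ) < ((F n).card : ℝ))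
  calc m * (symmDiff (F n) ((F n).image (g * ·))).card
      ≤ (m + 1) * (symmDiff (F n) ((F n).image (g * ·))).card := by
        apply Nat.mul_le_mul_right; omega
    _ ≤ (F n).card := le_of_lt h2

theorem okExists
    (hTS : ∀ (K : Finset Γ) (m : ℕ), ∃ F : Finset Γ, F.Nonempty ∧ ∀ g ∈ K,
      m * (symmDiff F (F.image (g * ·))).card ≤ F.card ∧
      m * (symmDiff F (F.image (· * g))).card ≤ F.card)
    (x : ℕ × List (List Γ)) : ∃ l : List Γ, okFun x l = true := by
  obtain ⟨F, hFne, hF⟩ := hTS ((decList Γ x.1).toFinset ∪ x.2.flatten.toFinset)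
    (max (x.1 + 1) (x.2.flatten.length + 1))
  refine ⟨F.toList, ?_⟩
  rw [okFun_spec]
  have htf : F.toList.toFinset = F := Finset.toList_toFinset F
  refine ⟨?_, ?_, ?_⟩
  · intro h
    rw [Finset.toList_eq_nil] at h
    exact Finset.nonempty_iff_ne_empty.1 hFne h
  · intro g hg
    have := hF g (Finset.mem_union_left _ (List.mem_toFinset.2 hg))
    rw [htf]
    constructor
    · exact le_trans (Nat.mul_le_mul_right _ (le_max_left _ _)) this.1
    · exact le_trans (Nat.mul_le_mul_right _ (le_max_left _ _)) this.2
  · intro y hy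
    have := hF y (Finset.mem_union_right _ (List.mem_toFinset.2 hy))
    rw [htf]
    exact le_trans (Nat.mul_le_mul_right _ (le_max_right _ _)) this.1

omit [Primcodable Γ] in
theorem tempered_bound (F : ℕ → Finset Γ) (len : ℕ → ℕ)
    (hcard : ∀ i, (F i).card ≤ len i)
    (hinv : ∀ j, ∀ i < j, ∀ y ∈ F i,
      ((∑ i ∈ Finset.range j, len i) + 1) *
        (symmDiff (F j) ((F j).image (y * ·))).card ≤ (F j).card) :
    ∀ j, (((Finset.range j).biUnion fun i => (F i)⁻¹ * F j)).card ≤ 2 * (F j).card := by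
  intro j
  set N := (∑ i ∈ Finset.range j, len i) + 1 with hN
  have hsub : ((Finset.range j).biUnion fun i => (F i)⁻¹ * F j) ⊆
      F j ∪ (Finset.range j).biUnion (fun i => (F i).biUnion
        (fun y => ((F j).image (fun x => y⁻¹ * x)) \ F j)) := by
    intro z hz
    obtain ⟨i, hi, hz'⟩ := Finset.mem_biUnion.1 hz
    rw [Finset.mem_mul] at hz'
    obtain ⟨a, ha, w, hw, rfl⟩ := hz'
    obtain ⟨y, hy, rfl⟩ := Finset.mem_inv.1 ha
    by_cases hmem : y⁻¹ * w ∈ F j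
    · exact Finset.mem_union_left _ hmem
    · refine Finset.mem_union_right _ (Finset.mem_biUnion.2 ⟨i, hi, ?_⟩)
      exact Finset.mem_biUnion.2 ⟨y, hy,
        Finset.mem_sdiff.2 ⟨Finset.mem_image_of_mem _ hw, hmem⟩⟩
  have hterm : ∀ i < j, ∀ y ∈ F i,
      (((F j).image (fun x => y⁻¹ * x)) \ F j).card
        ≤ (symmDiff (F j) ((F j).image (y * ·))).card := by
    intro i hi y hy
    have e1 : symmDiff ((F j).image (fun x => y⁻¹ * x)) (F j)
        = (symmDiff (F j) ((F j).image (y * ·))).image (fun x => y⁻¹ * x) := by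
      rw [Finset.image_symmDiff _ _ (mul_right_injective y⁻¹), Finset.image_image]
      have : ((fun x => y⁻¹ * x) ∘ (fun x => y * x)) = id := by
        funext x; simp
      rw [this, Finset.image_id, symmDiff_comm]
    have e2 : (((F j).image (fun x => y⁻¹ * x)) \ F j) ⊆
        symmDiff ((F j).image (fun x => y⁻¹ * x)) (F j) := by
      intro z hz
      rw [Finset.mem_sdiff] at hz
      rw [Finset.mem_symmDiff]
      exact Or.inl ⟨hz.1, hz.2⟩
    calc (((F j).image (fun x => y⁻¹ * x)) \ F j).card
        ≤ (symmDiff ((F j).image (fun x => y⁻¹ * x)) (F j)).card :=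
          Finset.card_le_card e2
      _ = (symmDiff (F j) ((F j).image (y * ·))).card := by
          rw [e1, Finset.card_image_of_injective _ (mul_right_injective y⁻¹)]
  have hsum : (∑ i ∈ Finset.range j, ∑ y ∈ F i,
      (symmDiff (F j) ((F j).image (y * ·))).card) ≤ (F j).card := by
    have h1 : N * (∑ i ∈ Finset.range j, ∑ y ∈ F i,
        (symmDiff (F j) ((F j).image (y * ·))).card) ≤ N * (F j).card := by
      rw [Finset.mul_sum]
      calc ∑ i ∈ Finset.range j, N * ∑ y ∈ F i,
            (symmDiff (F j) ((F j).image (y * ·))).card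
          = ∑ i ∈ Finset.range j, ∑ y ∈ F i,
            N * (symmDiff (F j) ((F j).image (y * ·))).card := by
            simp_rw [Finset.mul_sum]
        _ ≤ ∑ i ∈ Finset.range j, ∑ y ∈ F i, (F j).card := by
            refine Finset.sum_le_sum fun i hi => Finset.sum_le_sum fun y hy => ?_
            exact hinv j i (Finset.mem_range.1 hi) y hy
        _ = (∑ i ∈ Finset.range j, (F i).card) * (F j).card := by
            simp [Finset.sum_const, Finset.sum_mul]
        _ ≤ N * (F j).card := by
            apply Nat.mul_le_mul_right
            calc ∑ i ∈ Finset.range j, (F i).card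
                ≤ ∑ i ∈ Finset.range j, len i :=
                  Finset.sum_le_sum fun i _ => hcard i
              _ ≤ N := by omega
    exact Nat.le_of_mul_le_mul_left h1 (by omega)
  calc (((Finset.range j).biUnion fun i => (F i)⁻¹ * F j)).card
      ≤ (F j ∪ (Finset.range j).biUnion (fun i => (F i).biUnion
          (fun y => ((F j).image (fun x => y⁻¹ * x)) \ F j))).card :=
        Finset.card_le_card hsub
    _ ≤ (F j).card + ((Finset.range j).biUnion (fun i => (F i).biUnion
          (fun y => ((F j).image (fun x => y⁻¹ * x)) \ F j))).card :=
        Finset.card_union_le _ _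
    _ ≤ (F j).card + ∑ i ∈ Finset.range j, ((F i).biUnion
          (fun y => ((F j).image (fun x => y⁻¹ * x)) \ F j)).card := by
        gcongr
        exact Finset.card_biUnion_le
    _ ≤ (F j).card + ∑ i ∈ Finset.range j, ∑ y ∈ F i,
          (((F j).image (fun x => y⁻¹ * x)) \ F j).card := by
        gcongr with i hi
        exact Finset.card_biUnion_le
    _ ≤ (F j).card + ∑ i ∈ Finset.range j, ∑ y ∈ F i,
          (symmDiff (F j) ((F j).image (y * ·))).card := by
        have := fun i (hi : i ∈ Finset.range j) =>
          Finset.sum_le_sum fun y (hy : y ∈ F i) => hterm i (Finset.mem_range.1 hi) y hy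
        exact Nat.add_le_add_left (Finset.sum_le_sum this) _
    _ ≤ (F j).card + (F j).card := by gcongr
    _ = 2 * (F j).card := by ring

end Assembly
end FolnerAux




open Pointwise Filter

/-- A left Følner sequence: a sequence of nonempty finite subsets `F n` of `Γ` such that
`|F n ∆ g • F n| / |F n| → 0` for every `g ∈ Γ`. -/
def IsLeftFolner {Γ : Type*} [Group Γ] [DecidableEq Γ] (F : ℕ → Finset Γ) : Prop :=
  (∀ n, (F n).Nonempty) ∧
    ∀ g : Γ, Tendsto (fun n => ((symmDiff (F n) ((F n).image (g * ·))).card : ℝ) / (F n).card)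
      atTop (nhds 0)

/-- A right Følner sequence: a sequence of nonempty finite subsets `F n` of `Γ` such that
`|F n ∆ (F n)g| / |F n| → 0` for every `g ∈ Γ`. -/
def IsRightFolner {Γ : Type*} [Group Γ] [DecidableEq Γ] (F : ℕ → Finset Γ) : Prop :=
  (∀ n, (F n).Nonempty) ∧
    ∀ g : Γ, Tendsto (fun n => ((symmDiff (F n) ((F n).image (· * g))).card : ℝ) / (F n).card)
      atTop (nhds 0)

/-- A sequence of finite subsets of `Γ` is `C`-tempered if
`|⋃_{i<j} (F i)⁻¹ * F j| ≤ C * |F j|` for every `j`. -/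
def IsTempered {Γ : Type*} [Group Γ] [DecidableEq Γ] (C : ℝ) (F : ℕ → Finset Γ) : Prop :=
  ∀ j, ((((Finset.range j).biUnion fun i => (F i)⁻¹ * F j)).card : ℝ) ≤ C * (F j).card

/-- A sequence of finite subsets of `Γ` is canonically computable if the function
`n ↦ F n` is computable (we represent each finite set by a list enumerating it). -/
def CanonicallyComputable {Γ : Type*} [Primcodable Γ] [DecidableEq Γ]
    (F : ℕ → Finset Γ) : Prop :=
  ∃ L : ℕ → List Γ, Computable L ∧ ∀ n, (L n).toFinset = F n

/-- Every computable amenable group admits a canonically computable, tempered,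
two-sided Følner sequence. -/
theorem exists_canonically_computable_tempered_two_sided_folner
    {Γ : Type*} [Group Γ] [DecidableEq Γ] [Primcodable Γ]
    (hmul : Computable fun p : Γ × Γ => p.1 * p.2)
    (hamen : ∃ F : ℕ → Finset Γ, IsLeftFolner F) :
    ∃ F : ℕ → Finset Γ, CanonicallyComputable F ∧ (∃ C : ℝ, IsTempered C F) ∧
      IsLeftFolner F ∧ IsRightFolner F := by

  classical
  obtain ⟨F0, hF0⟩ := hamen
  have hLC := FolnerAux.leftCond F0 hF0.1 hF0.2
  have hTS := FolnerAux.twosided hLC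
  have hdom : ∀ x : ℕ × List (List Γ),
      (FolnerAux.searchPart (FolnerAux.okFun (Γ := Γ)) x).Dom :=
    fun x => FolnerAux.searchPart_dom (FolnerAux.okExists hTS x)
  set step : ℕ × List (List Γ) → List Γ :=
    fun x => (FolnerAux.searchPart (FolnerAux.okFun (Γ := Γ)) x).get (hdom x) with hstepdef
  have hstep_comp : Computable step :=
    (FolnerAux.searchPart_partrec (FolnerAux.okFun_computable hmul)).of_eq_tot
      (fun x => Part.get_mem (hdom x))
  have hstep_ok : ∀ x, FolnerAux.okFun x (step x) = true :=
    fun x => FolnerAux.searchPart_spec (Part.get_mem (hdom x))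
  set hist : ℕ → List (List Γ) :=
    fun n => Nat.rec [] (fun y IH => IH ++ [step (y, IH)]) n with hhistdef
  have hhist_comp : Computable hist := by
    have H := Computable.nat_rec (f := fun n : ℕ => n)
      (g := fun _ : ℕ => ([] : List (List Γ)))
      (h := fun (_ : ℕ) (p : ℕ × List (List Γ)) => p.2 ++ [step p])
      Computable.id (Computable.const [])
      ((Primrec.list_concat.to_comp).comp (Computable.snd.comp Computable.snd)
        (hstep_comp.comp Computable.snd))
    exact H.of_eq fun n => rfl
  set L : ℕ → List Γ := fun n => step (n, hist n) with hLdef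
  have hL_comp : Computable L := hstep_comp.comp (Computable.pair Computable.id hhist_comp)
  have hhist_eq : ∀ n, hist n = (List.range n).map L := by
    intro n
    induction n with
    | zero => simp [hhistdef]
    | succ n ih =>
      have h1 : hist (n + 1) = hist n ++ [step (n, hist n)] := rfl
      rw [h1, List.range_succ, List.map_append, ← ih]
      rfl
  set F : ℕ → Finset Γ := fun n => (L n).toFinset with hFdef
  have hspec := fun n => (FolnerAux.okFun_spec (n, hist n) (L n)).1 (hstep_ok (n, hist n))
  have hne : ∀ n, (F n).Nonempty := by
    intro n
    obtain ⟨x, hx⟩ := List.exists_mem_of_ne_nil _ ((hspec n).1)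
    exact ⟨x, List.mem_toFinset.2 hx⟩
  have hpos : ∀ n, 0 < (F n).card := fun n => Finset.card_pos.2 (hne n)
  have hleft : ∀ g : Γ, ∀ n, Encodable.encode g ≤ n →
      (n + 1) * (symmDiff (F n) ((F n).image (g * ·))).card ≤ (F n).card :=
    fun g n hn => ((hspec n).2.1 g (FolnerAux.mem_decList hn)).1
  have hright : ∀ g : Γ, ∀ n, Encodable.encode g ≤ n →
      (n + 1) * (symmDiff (F n) ((F n).image (· * g))).card ≤ (F n).card :=
    fun g n hn => ((hspec n).2.1 g (FolnerAux.mem_decList hn)).2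
  have hflatlen : ∀ j, ((List.range j).map L).flatten.length
      = ∑ i ∈ Finset.range j, (L i).length := by
    intro j
    induction j with
    | zero => simp
    | succ j ih =>
      rw [List.range_succ, List.map_append, List.flatten_append, Finset.sum_range_succ,
        List.length_append, ih]
      simp
  have hinv : ∀ j, ∀ i < j, ∀ y ∈ F i,
      ((∑ i ∈ Finset.range j, (L i).length) + 1) *
        (symmDiff (F j) ((F j).image (y * ·))).card ≤ (F j).card := by
    intro j i hij y hy
    have hyfl : y ∈ (hist j).flatten := by
      rw [hhist_eq]
      exact List.mem_flatten.2 ⟨L i, List.mem_map.2 ⟨i, List.mem_range.2 hij, rfl⟩,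
        List.mem_toFinset.1 hy⟩
    have h2 := (hspec j).2.2 y hyfl
    have h3 : (hist j).flatten.length = ∑ i ∈ Finset.range j, (L i).length := by
      rw [hhist_eq, hflatlen]
    rwa [h3] at h2
  refine ⟨F, ⟨L, hL_comp, fun n => rfl⟩, ⟨2, ?_⟩, ⟨hne, ?_⟩, ⟨hne, ?_⟩⟩
  · intro j
    have h1 := FolnerAux.tempered_bound F (fun i => (L i).length)
      (fun i => (L i).toFinset_card_le) hinv j
    calc ((((Finset.range j).biUnion fun i => (F i)⁻¹ * F j)).card : ℝ)
        ≤ ((2 * (F j).card : ℕ) : ℝ) := by exact_mod_cast h1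
      _ = 2 * ((F j).card : ℝ) := by push_cast; ring
  · intro g
    apply FolnerAux.tendsto_of_bound _ _ hpos
    exact Filter.eventually_atTop.2 ⟨Encodable.encode g, fun n hn => hleft g n hn⟩
  · intro g
    apply FolnerAux.tendsto_of_bound _ _ hpos
    exact Filter.eventually_atTop.2 ⟨Encodable.encode g, fun n hn => hright g n hn⟩
end

section
/- Every left Følner sequence (F_n)_{n≥1} in a countable group Γ has a subsequence (F_{n_i})_{i≥1} that is a 2-tempered left Følner sequence, i.e., |⋃_{j<i} F_{n_j}⁻¹ · F_{n_i}| ≤ 2·|F_{n_i}| for every i. -/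
open Pointwise Filter

private lemma key_step {Γ : Type*} [Group Γ] [DecidableEq Γ]
    (F : ℕ → Finset Γ) (hF : IsLeftFolner F) (K : Finset Γ) (m : ℕ) :
    ∃ n, m < n ∧ ((K * F n).card : ℝ) ≤ 2 * (F n).card := by
  rcases K.eq_empty_or_nonempty with rfl | hK
  · exact ⟨m + 1, Nat.lt_succ_self m, by simp [Finset.empty_mul]⟩
  have hKc : (0 : ℝ) < K.card := by exact_mod_cast hK.card_pos
  set ε : ℝ := 1 / K.card with hε
  have hεpos : 0 < ε := by positivity
  have hev : ∀ᶠ n in atTop, ∀ g ∈ K,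
      ((symmDiff (F n) ((F n).image (g * ·))).card : ℝ) / (F n).card < ε := by
    rw [eventually_all_finset]
    intro g _
    exact (hF.2 g).eventually_lt_const hεpos
  obtain ⟨n, hn, hgood⟩ := ((eventually_gt_atTop m).and hev).exists
  refine ⟨n, hn, ?_⟩
  have hFn : (0 : ℝ) < (F n).card := by exact_mod_cast (hF.1 n).card_pos
  -- subset lemma
  have hsub : K * F n ⊆
      F n ∪ K.biUnion (fun g => symmDiff (F n) ((F n).image (g * ·))) := by
    intro x hx
    rw [Finset.mem_mul] at hx
    obtain ⟨g, hg, y, hy, rfl⟩ := hx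
    by_cases hgy : g * y ∈ F n
    · exact Finset.mem_union_left _ hgy
    · refine Finset.mem_union_right _ (Finset.mem_biUnion.2 ⟨g, hg, ?_⟩)
      rw [Finset.mem_symmDiff]
      exact Or.inr ⟨Finset.mem_image.2 ⟨y, hy, rfl⟩, hgy⟩
  have hcard : ((K * F n).card : ℝ) ≤
      (F n).card + ∑ g ∈ K, ((symmDiff (F n) ((F n).image (g * ·))).card : ℝ) := by
    calc ((K * F n).card : ℝ)
        ≤ ((F n ∪ K.biUnion (fun g => symmDiff (F n) ((F n).image (g * ·)))).card : ℝ) := by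
          exact_mod_cast Finset.card_le_card hsub
      _ ≤ ((F n).card : ℝ) +
          ((K.biUnion (fun g => symmDiff (F n) ((F n).image (g * ·)))).card : ℝ) := by
          exact_mod_cast Finset.card_union_le _ _
      _ ≤ (F n).card + ∑ g ∈ K, ((symmDiff (F n) ((F n).image (g * ·))).card : ℝ) := by
          gcongr
          exact_mod_cast Finset.card_biUnion_le
  have hsum : ∑ g ∈ K, ((symmDiff (F n) ((F n).image (g * ·))).card : ℝ) ≤ (F n).card := by
    calc ∑ g ∈ K, ((symmDiff (F n) ((F n).image (g * ·))).card : ℝ)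
        ≤ ∑ _g ∈ K, ε * (F n).card := by
          refine Finset.sum_le_sum fun g hg => ?_
          have := hgood g hg
          rw [div_lt_iff₀ hFn] at this
          linarith
      _ = K.card * (ε * (F n).card) := by rw [Finset.sum_const, nsmul_eq_mul]
      _ = (F n).card := by rw [← mul_assoc, hε, mul_one_div_cancel hKc.ne', one_mul]
  linarith

/-- Every left Følner sequence in a countable group has a subsequence which is a
`2`-tempered left Følner sequence. -/
theorem exists_tempered_subsequence {Γ : Type*} [Group Γ] [DecidableEq Γ] [Countable Γ]
    (F : ℕ → Finset Γ) (hF : IsLeftFolner F) :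
    ∃ nseq : ℕ → ℕ, StrictMono nseq ∧ IsLeftFolner (fun i => F (nseq i)) ∧
      IsTempered 2 (fun i => F (nseq i)) := by
  classical
  have key := key_step F hF
  set pick : Finset Γ → ℕ → ℕ := fun K m => (key K m).choose with hpick
  have hpick_gt : ∀ K m, m < pick K m := fun K m => (key K m).choose_spec.1
  have hpick_card : ∀ K m, ((K * F (pick K m)).card : ℝ) ≤ 2 * (F (pick K m)).card :=
    fun K m => (key K m).choose_spec.2
  -- recursive construction: state is (current index, accumulated set of inverses)
  set p : ℕ → ℕ × Finset Γ :=
    fun i => Nat.rec (0, (F 0)⁻¹)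
      (fun _ q => (pick q.2 q.1, q.2 ∪ (F (pick q.2 q.1))⁻¹)) i with hp
  set nseq : ℕ → ℕ := fun i => (p i).1 with hnseq
  have hsucc : ∀ i, p (i + 1) = (pick (p i).2 (p i).1, (p i).2 ∪ (F (pick (p i).2 (p i).1))⁻¹) :=
    fun i => rfl
  have hmono : StrictMono nseq := by
    apply strictMono_nat_of_lt_succ
    intro i
    have := hpick_gt (p i).2 (p i).1
    simpa [hnseq, hsucc i] using this
  have hp2 : ∀ i, (p i).2 = (Finset.range (i + 1)).biUnion fun k => (F (nseq k))⁻¹ := by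
    intro i
    induction i with
    | zero =>
        show (F 0)⁻¹ = _
        simp [hnseq, hp]
    | succ i ih =>
        have h1 : (p (i + 1)).2 = (p i).2 ∪ (F (nseq (i + 1)))⁻¹ := rfl
        rw [h1, Finset.range_add_one, Finset.biUnion_insert, ih]
        exact Finset.union_comm _ _
  refine ⟨nseq, hmono, ⟨fun i => hF.1 _, fun g => (hF.2 g).comp hmono.tendsto_atTop⟩, ?_⟩
  intro j
  match j with
  | 0 => simp
  | (i + 1) =>
      have hbU : (Finset.range (i + 1)).biUnion (fun k => (F (nseq k))⁻¹ * F (nseq (i + 1)))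
          = (p i).2 * F (nseq (i + 1)) := by
        rw [hp2 i]
        ext x
        simp only [Finset.mem_biUnion, Finset.mem_mul]
        tauto
      have hn1 : nseq (i + 1) = pick (p i).2 (p i).1 := rfl
      show (((Finset.range (i + 1)).biUnion fun k => (F (nseq k))⁻¹ * F (nseq (i + 1))).card : ℝ)
          ≤ 2 * (F (nseq (i + 1))).card
      rw [hbU, hn1]
      exact hpick_card (p i).2 (p i).1
end

section
/- Let Γ = ℤ and F_n = {−2^n, −2^n+1, …, 2^n} for n ≥ 1, and define f : ℤ → ℝ by f(m) = 2^k if m = 2^k + 1 for some integer k ≥ 0, and f(m) = 0 otherwise. Then limsup_{n→∞} (1/|F_n|) Σ_{g∈F_n} f(g) = 1/2 while limsup_{n→∞} (1/|F_n|) Σ_{g∈F_n} f(g+1) = 1; in particular the two limsups are not equal, so the limsup of Følner averages of an unbounded nonnegative function need not be translation invariant. -/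
open Filter

lemma pow2_strictMono : StrictMono (fun k : ℕ => (2:ℤ)^k) :=
  fun a b h => pow_lt_pow_right₀ (by norm_num) h

lemma sum_f_eq (f : ℤ → ℝ)
    (hf1 : ∀ k : ℕ, f (2 ^ k + 1) = 2 ^ k)
    (hf0 : ∀ m : ℤ, (∀ k : ℕ, m ≠ 2 ^ k + 1) → f m = 0) (n : ℕ) :
    ∑ g ∈ Finset.Icc (-(2 ^ n) : ℤ) (2 ^ n), f g = 2 ^ n - 1 := by
  have hsub : (Finset.range n).image (fun k => (2:ℤ)^k + 1) ⊆
      Finset.Icc (-(2 ^ n) : ℤ) (2 ^ n) := by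
    intro m hm
    simp only [Finset.mem_image, Finset.mem_range] at hm
    obtain ⟨k, hk, rfl⟩ := hm
    have h1 : (2:ℤ)^k < 2^n := pow2_strictMono hk
    have h2 : (0:ℤ) < 2^n := by positivity
    have h3 : (0:ℤ) < 2^k := by positivity
    simp only [Finset.mem_Icc]
    omega
  rw [← Finset.sum_subset hsub]
  · rw [Finset.sum_image (by
      intro a _ b _ h
      exact pow2_strictMono.injective (by linarith)), ]
    have : ∀ k ∈ Finset.range n, f ((2:ℤ)^k + 1) = (2:ℝ)^k := by
      intro k _; exact_mod_cast hf1 k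
    rw [Finset.sum_congr rfl this, geom_sum_eq (by norm_num : (2:ℝ) ≠ 1)]
    ring
  · intro x hx hx'
    apply hf0
    intro k hk
    rcases lt_or_ge k n with h | h
    · exact hx' (Finset.mem_image.2 ⟨k, Finset.mem_range.2 h, hk.symm⟩)
    · have h1 : (2:ℤ)^n ≤ 2^k := pow2_strictMono.monotone h
      simp only [Finset.mem_Icc] at hx
      omega

lemma sum_f_shift_eq (f : ℤ → ℝ)
    (hf1 : ∀ k : ℕ, f (2 ^ k + 1) = 2 ^ k)
    (hf0 : ∀ m : ℤ, (∀ k : ℕ, m ≠ 2 ^ k + 1) → f m = 0) (n : ℕ) :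
    ∑ g ∈ Finset.Icc (-(2 ^ n) : ℤ) (2 ^ n), f (g + 1) = 2 ^ (n+1) - 1 := by
  have hsub : (Finset.range (n+1)).image (fun k => (2:ℤ)^k) ⊆
      Finset.Icc (-(2 ^ n) : ℤ) (2 ^ n) := by
    intro m hm
    simp only [Finset.mem_image, Finset.mem_range, Nat.lt_succ_iff] at hm
    obtain ⟨k, hk, rfl⟩ := hm
    have h1 : (2:ℤ)^k ≤ 2^n := pow2_strictMono.monotone hk
    have h3 : (0:ℤ) < 2^k := by positivity
    simp only [Finset.mem_Icc]
    omega
  rw [← Finset.sum_subset hsub]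
  · rw [Finset.sum_image (by
      intro a _ b _ h
      exact pow2_strictMono.injective h)]
    have : ∀ k ∈ Finset.range (n+1), f ((2:ℤ)^k + 1) = (2:ℝ)^k := by
      intro k _; exact_mod_cast hf1 k
    rw [Finset.sum_congr rfl this, geom_sum_eq (by norm_num : (2:ℝ) ≠ 1)]
    ring
  · intro x hx hx'
    apply hf0
    intro k hk
    have hk' : x = (2:ℤ)^k := by omega
    rcases lt_or_ge k (n+1) with h | h
    · exact hx' (Finset.mem_image.2 ⟨k, Finset.mem_range.2 h, hk'.symm⟩)
    · have h1 : (2:ℤ)^(n+1) ≤ 2^k := pow2_strictMono.monotone h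
      have h2 : (2:ℤ)^n < 2^(n+1) := pow2_strictMono (Nat.lt_succ_self n)
      simp only [Finset.mem_Icc] at hx
      omega

lemma card_F (n : ℕ) : ((Finset.Icc (-(2 ^ n) : ℤ) (2 ^ n)).card : ℝ) = 2 ^ (n+1) + 1 := by
  rw [Int.card_Icc]
  have h : ((2:ℤ)^n + 1 - -(2^n)).toNat = 2^(n+1) + 1 := by
    have : (0:ℤ) < 2^n := by positivity
    have : ((2:ℤ)^n + 1 - -(2^n)) = 2^(n+1) + 1 := by ring
    rw [this]
    have : ((2:ℤ)^(n+1)) = ((2^(n+1) : ℕ) : ℤ) := by push_cast; ring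
    omega
  rw [h]
  push_cast
  ring

lemma half_pow_tendsto : Tendsto (fun n : ℕ => ((1:ℝ)/2)^n) atTop (nhds 0) :=
  tendsto_pow_atTop_nhds_zero_of_lt_one (by norm_num) (by norm_num)

/-- For `Γ = ℤ`, `F n = [-2^n, 2^n]` and the unbounded nonnegative function `f` with
`f (2^k + 1) = 2^k` for `k ≥ 0` and `f = 0` elsewhere, the limsup of the Følner averages
of `f` equals `1/2`, the limsup of the averages of the translate `g ↦ f (g + 1)` equals `1`;
in particular the two limsups differ, so limsup of Følner averages of an unbounded
nonnegative function need not be translation invariant. -/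
theorem limsup_avg_not_translation_invariant
    (f : ℤ → ℝ)
    (hf1 : ∀ k : ℕ, f (2 ^ k + 1) = 2 ^ k)
    (hf0 : ∀ m : ℤ, (∀ k : ℕ, m ≠ 2 ^ k + 1) → f m = 0)
    (F : ℕ → Finset ℤ) (hF : ∀ n, F n = Finset.Icc (-(2 ^ n) : ℤ) (2 ^ n)) :
    limsup (fun n => (∑ g ∈ F n, f g) / (F n).card) atTop = 1 / 2 ∧
    limsup (fun n => (∑ g ∈ F n, f (g + 1)) / (F n).card) atTop = 1 ∧
    limsup (fun n => (∑ g ∈ F n, f g) / (F n).card) atTop ≠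
      limsup (fun n => (∑ g ∈ F n, f (g + 1)) / (F n).card) atTop := by
  have hpow : ∀ n : ℕ, (0:ℝ) < 2^n := fun n => by positivity
  have e1 : ∀ n : ℕ, (∑ g ∈ F n, f g) / (F n).card
      = (1 - (1/2)^n) / (2 + (1/2)^n) := by
    intro n
    rw [hF n, sum_f_eq f hf1 hf0 n, card_F n]
    have key : ((1:ℝ)/2)^n * 2^n = 1 := by rw [← mul_pow]; norm_num
    rw [div_eq_div_iff (by positivity) (by positivity)]
    linear_combination 3 * key
  have e2 : ∀ n : ℕ, (∑ g ∈ F n, f (g + 1)) / (F n).card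
      = (2 - (1/2)^n) / (2 + (1/2)^n) := by
    intro n
    rw [hF n, sum_f_shift_eq f hf1 hf0 n, card_F n]
    have key : ((1:ℝ)/2)^n * 2^n = 1 := by rw [← mul_pow]; norm_num
    rw [div_eq_div_iff (by positivity) (by positivity)]
    linear_combination 4 * key
  have t1 : Tendsto (fun n => (∑ g ∈ F n, f g) / (F n).card) atTop (nhds (1/2)) := by
    simp only [e1]
    have h := ((tendsto_const_nhds (x := (1:ℝ))).sub half_pow_tendsto).div
      (tendsto_const_nhds.add half_pow_tendsto) (by norm_num : (2:ℝ) + 0 ≠ 0)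
    convert h using 2
    norm_num
    norm_num
  have t2 : Tendsto (fun n => (∑ g ∈ F n, f (g + 1)) / (F n).card) atTop (nhds 1) := by
    simp only [e2]
    have h := ((tendsto_const_nhds (x := (2:ℝ))).sub half_pow_tendsto).div
      (tendsto_const_nhds.add half_pow_tendsto) (by norm_num : (2:ℝ) + 0 ≠ 0)
    convert h using 2
    norm_num
    norm_num
  refine ⟨t1.limsup_eq, t2.limsup_eq, ?_⟩
  rw [t1.limsup_eq, t2.limsup_eq]
  norm_num
end

section
/- Let Γ be a countable group acting by measure-preserving transformations on a probability space (X, μ), let F ⊆ Γ be a nonempty finite subset, and let I, U ⊆ X be measurable sets. Then μ(I ∩ ⋂_{g∈F} g⁻¹U) ≤ μ(I)·μ(U) + ‖(1/|F|) Σ_{g∈F} 1_{gI} − μ(I)‖_{L²(μ)}, where 1_{gI} denotes the indicator function of the set gI = {g·x : x ∈ I} and g⁻¹U = {x : g·x ∈ U}. -/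
open MeasureTheory

/-- Let a countable group `Γ` act by measure-preserving transformations on a probability
space `(X, μ)`, let `F ⊆ Γ` be a nonempty finite subset and `I, U ⊆ X` measurable sets.
Then `μ(I ∩ ⋂_{g∈F} g⁻¹U) ≤ μ(I)·μ(U) + ‖(1/|F|) Σ_{g∈F} 1_{gI} − μ(I)‖_{L²(μ)}`. -/
theorem measure_inter_iInter_le
    {Γ : Type*} [Group Γ] [Countable Γ]
    {X : Type*} [MeasurableSpace X] (μ : Measure X) [IsProbabilityMeasure μ]
    [MulAction Γ X]
    (hmp : ∀ g : Γ, MeasurePreserving (fun x => g • x) μ μ)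
    (F : Finset Γ) (hF : F.Nonempty)
    (I U : Set X) (hI : MeasurableSet I) (hU : MeasurableSet U) :
    μ (I ∩ ⋂ g ∈ F, (fun x => g • x) ⁻¹' U) ≤
      μ I * μ U +
        eLpNorm (fun x =>
          (∑ g ∈ F, Set.indicator ((fun y => g⁻¹ • y) ⁻¹' I) (fun _ => (1 : ℝ)) x) / F.card
            - (μ I).toReal) 2 μ := by
  classical
  set n := F.card with hn
  have hn0 : 0 < n := Finset.card_pos.2 hF
  set Ig : Γ → Set X := fun g => (fun y => g⁻¹ • y) ⁻¹' I with hIg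
  have mIg : ∀ g, MeasurableSet (Ig g) := fun g => (hmp g⁻¹).measurable hI
  set h : X → ℝ := fun x => (∑ g ∈ F, (Ig g).indicator (fun _ => (1 : ℝ)) x) / n with hh
  set f : X → ℝ := fun x => h x - (μ I).toReal with hf
  -- measurability of f
  have mh : Measurable h := by
    apply Measurable.div_const
    exact Finset.measurable_sum _ fun g _ => (measurable_const.indicator (mIg g))
  have mf : Measurable f := mh.sub measurable_const
  -- step 1
  have step1 : ∀ g ∈ F, μ (I ∩ ⋂ g ∈ F, (fun x => g • x) ⁻¹' U) ≤ μ (Ig g ∩ U) := by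
    intro g hg
    have h1 : μ (I ∩ ⋂ g ∈ F, (fun x => g • x) ⁻¹' U) ≤ μ (I ∩ (fun x => g • x) ⁻¹' U) := by
      apply measure_mono
      exact Set.inter_subset_inter_right _ (Set.biInter_subset_of_mem hg)
    have h2 : (fun x => g • x) ⁻¹' (Ig g ∩ U) = I ∩ (fun x => g • x) ⁻¹' U := by
      ext x
      simp [Ig]
    have h3 : μ (I ∩ (fun x => g • x) ⁻¹' U) = μ (Ig g ∩ U) := by
      rw [← h2, (hmp g).measure_preimage ((mIg g).inter hU).nullMeasurableSet]
    exact h1.trans_eq h3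
  set G : X → ENNReal := fun x => ∑ g ∈ F, (Ig g).indicator (fun _ => (1 : ENNReal)) x with hG
  have mG : Measurable G := Finset.measurable_sum _ fun g _ => (measurable_const.indicator (mIg g))
  have step2 : ∑ g ∈ F, μ (Ig g ∩ U) = ∫⁻ x in U, G x ∂μ := by
    rw [lintegral_finset_sum _ fun g _ => (measurable_const.indicator (mIg g))]
    refine Finset.sum_congr rfl fun g hg => ?_
    rw [setLIntegral_indicator (mIg g), setLIntegral_one]
  -- pointwise : G x / n = ofReal (h x)
  have hpoint : ∀ x, G x / n = ENNReal.ofReal (h x) := by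
    intro x
    have e1 : G x = ENNReal.ofReal (∑ g ∈ F, (Ig g).indicator (fun _ => (1 : ℝ)) x) := by
      rw [ENNReal.ofReal_sum_of_nonneg (fun g _ => Set.indicator_nonneg (fun _ _ => zero_le_one) x)]
      refine Finset.sum_congr rfl fun g hg => ?_
      by_cases hx : x ∈ Ig g <;> simp [hx]
    rw [e1, hh]
    rw [ENNReal.ofReal_div_of_pos (by exact_mod_cast hn0)]
    congr 1
    simp
  -- step 3: main chain
  have key : μ (I ∩ ⋂ g ∈ F, (fun x => g • x) ⁻¹' U) ≤
      μ I * μ U + eLpNorm f 1 μ := by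
    have c1 : μ (I ∩ ⋂ g ∈ F, (fun x => g • x) ⁻¹' U) ≤ (∫⁻ x in U, G x ∂μ) / n := by
      rw [ENNReal.le_div_iff_mul_le (Or.inl (by exact_mod_cast hn0.ne'))
        (Or.inl (ENNReal.natCast_ne_top n)), ← step2]
      calc μ (I ∩ ⋂ g ∈ F, (fun x => g • x) ⁻¹' U) * n
          = ∑ _g ∈ F, μ (I ∩ ⋂ g ∈ F, (fun x => g • x) ⁻¹' U) := by
            rw [Finset.sum_const, nsmul_eq_mul, mul_comm]
        _ ≤ ∑ g ∈ F, μ (Ig g ∩ U) := Finset.sum_le_sum step1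
    have c2 : (∫⁻ x in U, G x ∂μ) / n = ∫⁻ x in U, G x / n ∂μ := by
      simp only [div_eq_mul_inv]
      rw [lintegral_mul_const _ mG]
    have c3 : ∫⁻ x in U, G x / n ∂μ ≤
        ∫⁻ x in U, (ENNReal.ofReal (μ I).toReal + ENNReal.ofReal |f x|) ∂μ := by
      refine lintegral_mono fun x => ?_
      rw [hpoint x]
      calc ENNReal.ofReal (h x) ≤ ENNReal.ofReal ((μ I).toReal + |f x|) := by
            apply ENNReal.ofReal_le_ofReal
            have : h x - (μ I).toReal ≤ |f x| := le_abs_self _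
            linarith
        _ ≤ _ := ENNReal.ofReal_add_le
    have c4 : ∫⁻ x in U, (ENNReal.ofReal (μ I).toReal + ENNReal.ofReal |f x|) ∂μ
        ≤ μ I * μ U + eLpNorm f 1 μ := by
      rw [lintegral_add_left measurable_const]
      gcongr
      · rw [lintegral_const, Measure.restrict_apply_univ,
          ENNReal.ofReal_toReal (measure_ne_top μ I)]
      · calc ∫⁻ x in U, ENNReal.ofReal |f x| ∂μ ≤ ∫⁻ x, ENNReal.ofReal |f x| ∂μ :=
              setLIntegral_le_lintegral _ _
          _ = eLpNorm f 1 μ := by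
              rw [eLpNorm_one_eq_lintegral_enorm]
              refine lintegral_congr fun x => ?_
              rw [← Real.norm_eq_abs, ofReal_norm]
    exact c1.trans (c2.trans_le (c3.trans c4))
  refine key.trans ?_
  gcongr
  exact eLpNorm_le_eLpNorm_of_exponent_le (by norm_num) mf.aestronglyMeasurable
end

section
/- (Mean ergodic theorem for amenable group actions.) Let Γ be a countable amenable group with a left Følner sequence (F_n)_{n≥1}, and let (X, μ, Γ) be an ergodic measure-preserving Γ-system. Then for every f ∈ L²(X, μ), the averages (1/|F_n|) Σ_{g∈F_n} f(g·x) converge in L²(X, μ) to the constant ∫ f dμ as n → ∞. -/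
open Pointwise Filter MeasureTheory
open scoped ENNReal
set_option linter.unusedSectionVars false

section Main

variable {Γ : Type*} [Group Γ] [Countable Γ] [DecidableEq Γ]
    {X : Type*} [MeasurableSpace X] (μ : Measure X) [IsProbabilityMeasure μ]
    [MulAction Γ X]

local instance : Fact ((1:ℝ≥0∞) ≤ 2) := ⟨one_le_two⟩

variable (hmp : ∀ g : Γ, MeasurePreserving (fun x => g • x) μ μ)

/-- Koopman operator. -/
noncomputable def koop (g : Γ) : Lp ℝ 2 μ →ₗᵢ[ℝ] Lp ℝ 2 μ :=
  Lp.compMeasurePreservingₗᵢ ℝ _ (hmp g)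

lemma koop_coeFn (g : Γ) (h : Lp ℝ 2 μ) :
    koop μ hmp g h =ᵐ[μ] fun x => h (g • x) :=
  Lp.coeFn_compMeasurePreserving h (hmp g)

lemma koop_comp (g g' : Γ) (h : Lp ℝ 2 μ) :
    koop μ hmp g' (koop μ hmp g h) = koop μ hmp (g * g') h := by
  apply Lp.ext (p := (2:ℝ≥0∞))
  have h1 := koop_coeFn μ hmp g' (koop μ hmp g h)
  have h2 : (fun x => (koop μ hmp g h : X → ℝ) (g' • x)) =ᵐ[μ]
      (fun x => (h : X → ℝ) (g • g' • x)) :=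
    (hmp g').quasiMeasurePreserving.ae_eq_comp (koop_coeFn μ hmp g h)
  refine h1.trans (h2.trans ?_)
  refine ((koop_coeFn μ hmp (g * g') h).symm.mono fun x hx => ?_)
  simp only [mul_smul] at hx
  exact hx.symm ▸ rfl

lemma koop_inv_self (g : Γ) (h : Lp ℝ 2 μ) :
    koop μ hmp g (koop μ hmp g⁻¹ h) = h := by
  rw [koop_comp, inv_mul_cancel]
  apply Lp.ext (p := (2:ℝ≥0∞))
  refine (koop_coeFn μ hmp 1 h).trans ?_
  filter_upwards with x
  rw [one_smul]

/-- The invariant subspace. -/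
noncomputable def invSub : Submodule ℝ (Lp ℝ 2 μ) where
  carrier := {h | ∀ g : Γ, koop μ hmp g h = h}
  add_mem' := fun {a b} ha hb g => by rw [map_add, ha g, hb g]
  zero_mem' := fun g => map_zero _
  smul_mem' := fun c {a} ha g => by rw [_root_.map_smul, ha g]

lemma invSub_isClosed : IsClosed ((invSub μ hmp : Submodule ℝ (Lp ℝ 2 μ)) : Set (Lp ℝ 2 μ)) := by
  have : ((invSub μ hmp : Submodule ℝ (Lp ℝ 2 μ)) : Set (Lp ℝ 2 μ))
      = ⋂ g : Γ, {h | koop μ hmp g h = h} := by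
    ext h
    simp only [SetLike.mem_coe, Set.mem_iInter, Set.mem_setOf_eq]
    rfl
  rw [this]
  exact isClosed_iInter fun g =>
    isClosed_eq (koop μ hmp g).continuous continuous_id


variable (F : ℕ → Finset Γ)

/-- The ergodic averages. -/
noncomputable def avg (n : ℕ) (h : Lp ℝ 2 μ) : Lp ℝ 2 μ :=
  (((F n).card : ℝ))⁻¹ • ∑ g ∈ F n, koop μ hmp g h

lemma avg_sub (n : ℕ) (a b : Lp ℝ 2 μ) :
    avg μ hmp F n (a - b) = avg μ hmp F n a - avg μ hmp F n b := by
  simp only [avg, map_sub, Finset.sum_sub_distrib, smul_sub]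

lemma avg_add (n : ℕ) (a b : Lp ℝ 2 μ) :
    avg μ hmp F n (a + b) = avg μ hmp F n a + avg μ hmp F n b := by
  simp only [avg, map_add, Finset.sum_add_distrib, smul_add]

lemma avg_smul (n : ℕ) (c : ℝ) (a : Lp ℝ 2 μ) :
    avg μ hmp F n (c • a) = c • avg μ hmp F n a := by
  simp only [avg, _root_.map_smul, ← Finset.smul_sum, smul_comm c]

lemma avg_zero (n : ℕ) : avg μ hmp F n (0 : Lp ℝ 2 μ) = 0 := by
  simp [avg]

lemma avg_norm_le (n : ℕ) (h : Lp ℝ 2 μ) : ‖avg μ hmp F n h‖ ≤ ‖h‖ := by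
  rcases Nat.eq_zero_or_pos (F n).card with hc | hc
  · simp [avg, hc, norm_nonneg]
  have hc' : ((F n).card : ℝ) ≠ 0 := Nat.cast_ne_zero.2 hc.ne'
  calc ‖avg μ hmp F n h‖
      ≤ ‖(((F n).card : ℝ))⁻¹‖ * ‖∑ g ∈ F n, koop μ hmp g h‖ := (norm_smul_le _ _)
    _ ≤ (((F n).card : ℝ))⁻¹ * ∑ g ∈ F n, ‖koop μ hmp g h‖ := by
        rw [norm_inv, Real.norm_natCast]
        exact mul_le_mul_of_nonneg_left (norm_sum_le _ _) (by positivity)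
    _ = (((F n).card : ℝ))⁻¹ * ((F n).card * ‖h‖) := by
        simp [LinearIsometry.norm_map, Finset.sum_const, nsmul_eq_mul]
    _ = ‖h‖ := by field_simp

lemma avg_of_invariant (hne : ∀ n, (F n).Nonempty) (n : ℕ) (h : Lp ℝ 2 μ)
    (hh : ∀ g : Γ, koop μ hmp g h = h) : avg μ hmp F n h = h := by
  have hc : ((F n).card : ℝ) ≠ 0 := Nat.cast_ne_zero.2 (hne n).card_ne_zero
  simp only [avg]
  rw [Finset.sum_congr rfl fun g _ => hh g, Finset.sum_const, ← Nat.cast_smul_eq_nsmul ℝ,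
    smul_smul, inv_mul_cancel₀ hc, one_smul]

lemma card_symmDiff_finset (s t : Finset Γ) :
    (symmDiff s t).card = (s \ t).card + (t \ s).card := by
  rw [symmDiff_def]
  exact Finset.card_union_of_disjoint disjoint_sdiff_sdiff

lemma avg_coboundary_tendsto (hF : IsLeftFolner F) (g : Γ) (k : Lp ℝ 2 μ) :
    Tendsto (fun n => avg μ hmp F n (koop μ hmp g k - k)) atTop (nhds 0) := by
  rw [tendsto_zero_iff_norm_tendsto_zero]
  have key : ∀ n, ‖avg μ hmp F n (koop μ hmp g k - k)‖
      ≤ ((symmDiff (F n) ((F n).image (g * ·))).card : ℝ) / (F n).card * ‖k‖ := by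
    intro n
    have hc : ((F n).card : ℝ) ≠ 0 := Nat.cast_ne_zero.2 (hF.1 n).card_ne_zero
    set B := (F n).image (g * ·) with hB
    have hsum : ∑ s ∈ F n, koop μ hmp s (koop μ hmp g k - k)
        = (∑ t ∈ B, koop μ hmp t k) - ∑ s ∈ F n, koop μ hmp s k := by
      rw [hB, Finset.sum_image (fun a _ b _ hab => mul_left_cancel hab)]
      rw [← Finset.sum_sub_distrib]
      refine Finset.sum_congr rfl fun s _ => ?_
      rw [map_sub, koop_comp]
    have hsum2 : (∑ t ∈ B, koop μ hmp t k) - ∑ s ∈ F n, koop μ hmp s k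
        = (∑ t ∈ B \ F n, koop μ hmp t k) - ∑ s ∈ F n \ B, koop μ hmp s k :=
      (Finset.sum_sdiff_sub_sum_sdiff ..).symm
    have hnorm : ‖∑ s ∈ F n, koop μ hmp s (koop μ hmp g k - k)‖
        ≤ ((symmDiff (F n) B).card : ℝ) * ‖k‖ := by
      rw [hsum, hsum2]
      calc ‖(∑ t ∈ B \ F n, koop μ hmp t k) - ∑ s ∈ F n \ B, koop μ hmp s k‖
          ≤ ‖∑ t ∈ B \ F n, koop μ hmp t k‖ + ‖∑ s ∈ F n \ B, koop μ hmp s k‖ :=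
            norm_sub_le _ _
        _ ≤ (∑ t ∈ B \ F n, ‖koop μ hmp t k‖) + ∑ s ∈ F n \ B, ‖koop μ hmp s k‖ :=
            add_le_add (norm_sum_le _ _) (norm_sum_le _ _)
        _ = ((B \ F n).card : ℝ) * ‖k‖ + ((F n \ B).card : ℝ) * ‖k‖ := by
            simp [LinearIsometry.norm_map, Finset.sum_const, nsmul_eq_mul]
        _ = ((symmDiff (F n) B).card : ℝ) * ‖k‖ := by
            rw [card_symmDiff_finset]
            push_cast
            ring
    calc ‖avg μ hmp F n (koop μ hmp g k - k)‖
        = (((F n).card : ℝ))⁻¹ * ‖∑ s ∈ F n, koop μ hmp s (koop μ hmp g k - k)‖ := by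
          rw [avg, norm_smul, norm_inv, Real.norm_natCast]
      _ ≤ (((F n).card : ℝ))⁻¹ * (((symmDiff (F n) B).card : ℝ) * ‖k‖) :=
          mul_le_mul_of_nonneg_left hnorm (by positivity)
      _ = ((symmDiff (F n) B).card : ℝ) / (F n).card * ‖k‖ := by
          field_simp
  have hlim : Tendsto (fun n => ((symmDiff (F n) ((F n).image (g * ·))).card : ℝ)
      / (F n).card * ‖k‖) atTop (nhds 0) := by
    simpa using (hF.2 g).mul_const ‖k‖
  exact squeeze_zero (fun n => norm_nonneg _) key hlim


open RealInnerProductSpace in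
lemma orth_span_cob_le_inv :
    (Submodule.span ℝ {v : Lp ℝ 2 μ | ∃ g : Γ, ∃ k, v = koop μ hmp g k - k})ᗮ
      ≤ invSub μ hmp := by
  intro h hh
  have hcob : ∀ (g : Γ) (k : Lp ℝ 2 μ), ⟪koop μ hmp g k - k, h⟫ = 0 := by
    intro g k
    exact hh _ (Submodule.subset_span ⟨g, k, rfl⟩)
  have hinv : ∀ g : Γ, koop μ hmp g⁻¹ h = h := by
    intro g
    have key : ∀ k : Lp ℝ 2 μ, ⟪k, koop μ hmp g⁻¹ h - h⟫ = 0 := by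
      intro k
      have h1 : ⟪k, koop μ hmp g⁻¹ h⟫ = ⟪koop μ hmp g k, h⟫ := by
        conv_rhs => rw [← koop_inv_self μ hmp g h]
        exact ((koop μ hmp g).inner_map_map k (koop μ hmp g⁻¹ h)).symm
      rw [inner_sub_right, h1, ← inner_sub_left]
      exact hcob g k
    have := inner_self_eq_zero (𝕜 := ℝ).1 (key (koop μ hmp g⁻¹ h - h))
    exact sub_eq_zero.1 this
  intro g
  have := hinv g⁻¹
  rwa [inv_inv] at this

lemma tendsto_avg_span (hF : IsLeftFolner F) (v : Lp ℝ 2 μ)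
    (hv : v ∈ Submodule.span ℝ {v : Lp ℝ 2 μ | ∃ g : Γ, ∃ k, v = koop μ hmp g k - k}) :
    Tendsto (fun n => avg μ hmp F n v) atTop (nhds 0) := by
  induction hv using Submodule.span_induction with
  | mem v hv =>
      obtain ⟨g, k, rfl⟩ := hv
      exact avg_coboundary_tendsto μ hmp F hF g k
  | zero =>
      refine Tendsto.congr (fun n => (avg_zero μ hmp F n).symm) tendsto_const_nhds
  | add a b _ _ ha hb =>
      have := ha.add hb
      rw [add_zero] at this
      exact this.congr fun n => (avg_add μ hmp F n a b).symm
  | smul c a _ ha =>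
      have := ha.const_smul c
      rw [smul_zero] at this
      exact this.congr fun n => (avg_smul μ hmp F n c a).symm

lemma tendsto_avg_orthogonal (hF : IsLeftFolner F) (w : Lp ℝ 2 μ)
    (hw : w ∈ (invSub μ hmp)ᗮ) :
    Tendsto (fun n => avg μ hmp F n w) atTop (nhds 0) := by
  set C : Set (Lp ℝ 2 μ) := {v : Lp ℝ 2 μ | ∃ g : Γ, ∃ k, v = koop μ hmp g k - k} with hC
  have hle : (invSub μ hmp)ᗮ ≤ (Submodule.span ℝ C).topologicalClosure := by
    rw [← Submodule.orthogonal_orthogonal_eq_closure]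
    exact Submodule.orthogonal_le (orth_span_cob_le_inv μ hmp)
  have hwcl : w ∈ closure ((Submodule.span ℝ C : Submodule ℝ (Lp ℝ 2 μ)) : Set (Lp ℝ 2 μ)) :=
    hle hw
  rw [NormedAddCommGroup.tendsto_nhds_zero]
  intro ε hε
  obtain ⟨v, hvmem, hvdist⟩ := Metric.mem_closure_iff.1 hwcl (ε / 2) (by positivity)
  have hspan := tendsto_avg_span μ hmp F hF v hvmem
  rw [tendsto_zero_iff_norm_tendsto_zero] at hspan
  have hev : ∀ᶠ n in atTop, ‖avg μ hmp F n v‖ < ε / 2 :=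
    (hspan.eventually (eventually_lt_nhds (by positivity : (0:ℝ) < ε / 2)))
  filter_upwards [hev] with n hn
  have h1 : ‖avg μ hmp F n w‖ ≤ ‖avg μ hmp F n (w - v)‖ + ‖avg μ hmp F n v‖ := by
    have he : avg μ hmp F n w = avg μ hmp F n (w - v) + avg μ hmp F n v := by
      rw [avg_sub, sub_add_cancel]
    rw [he]
    exact norm_add_le _ _
  have h2 : ‖avg μ hmp F n (w - v)‖ ≤ ‖w - v‖ := avg_norm_le μ hmp F n _
  have h3 : ‖w - v‖ < ε / 2 := by rwa [dist_eq_norm] at hvdist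
  calc ‖avg μ hmp F n w‖ ≤ ‖avg μ hmp F n (w - v)‖ + ‖avg μ hmp F n v‖ := h1
    _ < ε / 2 + ε / 2 := add_lt_add_of_le_of_lt (h2.trans h3.le) hn
    _ = ε := add_halves ε


lemma mem_invSub_iff (h : Lp ℝ 2 μ) :
    h ∈ invSub μ hmp ↔ ∀ g : Γ, koop μ hmp g h = h := Iff.rfl

lemma coeFn_finset_sum {ι : Type*} (s : Finset ι) (h : ι → Lp ℝ 2 μ) :
    (↑↑(∑ i ∈ s, h i) : X → ℝ) =ᵐ[μ] fun x => ∑ i ∈ s, (h i : X → ℝ) x := by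
  classical
  induction s using Finset.induction with
  | empty =>
      simp only [Finset.sum_empty]
      exact Lp.coeFn_zero ℝ 2 μ
  | insert a s hni ih =>
      rw [Finset.sum_insert hni]
      refine (Lp.coeFn_add _ _).trans ?_
      filter_upwards [ih] with x hx
      rw [Pi.add_apply, hx, Finset.sum_insert hni]

open RealInnerProductSpace in
lemma integral_orth_zero (w : Lp ℝ 2 μ) (hw : w ∈ (invSub μ hmp)ᗮ) :
    ∫ x, (w : X → ℝ) x ∂μ = 0 := by
  set one : Lp ℝ 2 μ := (memLp_const (1:ℝ)).toLp _ with hone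
  have honec : (one : X → ℝ) =ᵐ[μ] fun _ => (1:ℝ) := MemLp.coeFn_toLp _
  have honeM : one ∈ invSub μ hmp := by
    intro g
    apply Lp.ext (p := (2:ℝ≥0∞))
    refine (koop_coeFn μ hmp g one).trans ?_
    refine Filter.EventuallyEq.trans ?_ honec.symm
    exact (hmp g).quasiMeasurePreserving.ae_eq_comp honec
  have hinner : ⟪one, w⟫ = 0 := (Submodule.mem_orthogonal _ _).1 hw one honeM
  rw [MeasureTheory.L2.inner_def] at hinner
  rw [← hinner]
  refine integral_congr_ae ?_
  filter_upwards [honec] with x hx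
  simp [hx, RCLike.inner_apply, starRingEnd_apply, star_trivial]

end Main

lemma ae_const_of_invariant {Γ X : Type*} [Group Γ] [Countable Γ] [MulAction Γ X]
    [MeasurableSpace X] {μ : Measure X} [IsProbabilityMeasure μ]
    (herg : ∀ A : Set X, MeasurableSet A →
      (∀ g : Γ, μ (symmDiff ((fun x => g • x) ⁻¹' A) A) = 0) → μ A = 0 ∨ μ A = 1)
    (m : X → ℝ) (hmeas : Measurable m)
    (hm : ∀ g : Γ, (fun x => m (g • x)) =ᵐ[μ] m) :
    ∃ c : ℝ, m =ᵐ[μ] fun _ => c := by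
  set A : ℚ → Set X := fun q => {x | m x ≤ (q : ℝ)} with hA
  have hAmeas : ∀ q, MeasurableSet (A q) := fun q => hmeas measurableSet_Iic
  have h01 : ∀ q, μ (A q) = 0 ∨ μ (A q) = 1 := by
    intro q
    refine herg _ (hAmeas q) fun g => ?_
    have hsub : symmDiff ((fun x => g • x) ⁻¹' A q) (A q) ⊆ {x | ¬ m (g • x) = m x} := by
      intro x hx
      rcases Set.mem_symmDiff.1 hx with ⟨h1, h2⟩ | ⟨h1, h2⟩ <;>
        · simp only [A, Set.mem_preimage, Set.mem_setOf_eq] at h1 h2 ⊢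
          intro h
          first
          | (rw [h] at h1; exact h2 h1)
          | (rw [← h] at h1; exact h2 h1)
    exact measure_mono_null hsub (hm g)
  have hmono : ∀ {q q' : ℚ}, q ≤ q' → A q ⊆ A q' := by
    intro q q' hqq' x hx
    exact le_trans (show m x ≤ (q:ℝ) from hx) ((Rat.cast_le (K := ℝ)).2 hqq')
  have hup : ∀ {q q' : ℚ}, q ≤ q' → μ (A q) = 1 → μ (A q') = 1 := by
    intro q q' hqq' h1
    have := measure_mono (μ := μ) (hmono hqq')
    rw [h1] at this
    exact le_antisymm prob_le_one this
  -- S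
  have hSne : ∃ q, μ (A q) = 1 := by
    by_contra h
    push_neg at h
    have h0 : ∀ q, μ (A q) = 0 := fun q => (h01 q).resolve_right (h q)
    have huniv : (⋃ q : ℚ, A q) = Set.univ := by
      ext x; simp only [Set.mem_iUnion, Set.mem_univ, iff_true]
      obtain ⟨q, hq⟩ := exists_rat_gt (m x)
      exact ⟨q, le_of_lt hq⟩
    have := measure_iUnion_null (μ := μ) h0
    rw [huniv, measure_univ] at this
    exact one_ne_zero this
  have hSnotall : ∃ q, μ (A q) = 0 := by
    by_contra h
    push_neg at h
    have h1 : ∀ q, μ (A q) = 1 := fun q => (h01 q).resolve_left (h q)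
    have h0 : ∀ q : ℚ, μ (A q)ᶜ = 0 := by
      intro q
      rw [measure_compl (hAmeas q) (measure_ne_top μ _), h1 q, measure_univ, tsub_self]
    have huniv : (⋃ q : ℚ, (A q)ᶜ) = Set.univ := by
      ext x; simp only [Set.mem_iUnion, Set.mem_univ, iff_true, Set.mem_compl_iff]
      obtain ⟨q, hq⟩ := exists_rat_lt (m x)
      exact ⟨q, by simp only [A, Set.mem_setOf_eq]; exact not_le.2 hq⟩
    have := measure_iUnion_null (μ := μ) h0
    rw [huniv, measure_univ] at this
    exact one_ne_zero this
  set S : Set ℝ := {c : ℝ | ∃ q : ℚ, (q : ℝ) = c ∧ μ (A q) = 1} with hS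
  obtain ⟨q1, hq1⟩ := hSne
  obtain ⟨q0, hq0⟩ := hSnotall
  have hSne' : S.Nonempty := ⟨(q1 : ℝ), q1, rfl, hq1⟩
  have hSbdd : BddBelow S := by
    refine ⟨(q0 : ℝ), ?_⟩
    rintro c ⟨q, rfl, hq⟩
    by_contra h
    push_neg at h
    have : (q : ℚ) ≤ q0 := by exact_mod_cast h.le
    rw [hup this hq] at hq0
    exact one_ne_zero hq0
  set c := sInf S with hc
  refine ⟨c, ?_⟩
  have hgt : μ {x | c < m x} = 0 := by
    have hsub : {x | c < m x} ⊆ ⋃ q : {q : ℚ // c < (q : ℝ)}, (A q.1)ᶜ := by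
      intro x hx
      obtain ⟨q, hq1, hq2⟩ := exists_rat_btwn (Set.mem_setOf_eq ▸ hx)
      exact Set.mem_iUnion.2 ⟨⟨q, hq1⟩, not_le.2 hq2⟩
    refine measure_mono_null hsub (measure_iUnion_null ?_)
    rintro ⟨q, hq⟩
    obtain ⟨s, ⟨qs, rfl, hqs⟩, hslt⟩ := exists_lt_of_csInf_lt hSne' hq
    have : qs ≤ q := by exact_mod_cast hslt.le
    rw [measure_compl (hAmeas q) (measure_ne_top μ _), hup this hqs, measure_univ, tsub_self]
  have hlt : μ {x | m x < c} = 0 := by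
    have hsub : {x | m x < c} ⊆ ⋃ q : {q : ℚ // (q : ℝ) < c}, A q.1 := by
      intro x hx
      obtain ⟨q, hq1, hq2⟩ := exists_rat_btwn (Set.mem_setOf_eq ▸ hx)
      exact Set.mem_iUnion.2 ⟨⟨q, hq2⟩, hq1.le⟩
    refine measure_mono_null hsub (measure_iUnion_null ?_)
    rintro ⟨q, hq⟩
    rcases h01 q with h | h
    · exact h
    · exact absurd (csInf_le hSbdd ⟨q, rfl, h⟩) (not_le.2 hq)
  have : μ {x | ¬ m x = c} = 0 := by
    refine measure_mono_null (fun x hx => ?_) (measure_union_null hgt hlt)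
    rcases lt_or_gt_of_ne (Ne.symm hx) with h | h
    · exact Or.inl h
    · exact Or.inr h
  exact this


/-- Mean ergodic theorem for amenable group actions: if `Γ` is a countable amenable group
with a left Følner sequence `(F n)` acting ergodically by measure-preserving
transformations on a probability space `(X, μ)`, then for every `f ∈ L²(X, μ)` the
averages `(1/|F n|) Σ_{g ∈ F n} f (g • x)` converge in `L²(X, μ)` to the constant
`∫ f dμ`. -/
theorem mean_ergodic_theorem
    {Γ : Type*} [Group Γ] [Countable Γ] [DecidableEq Γ]
    {X : Type*} [MeasurableSpace X] (μ : Measure X) [IsProbabilityMeasure μ]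
    [MulAction Γ X]
    (hmp : ∀ g : Γ, MeasurePreserving (fun x => g • x) μ μ)
    (herg : ∀ A : Set X, MeasurableSet A →
      (∀ g : Γ, μ (symmDiff ((fun x => g • x) ⁻¹' A) A) = 0) → μ A = 0 ∨ μ A = 1)
    (F : ℕ → Finset Γ) (hF : IsLeftFolner F)
    (f : X → ℝ) (hf : MemLp f 2 μ) :
    Tendsto (fun n =>
        eLpNorm (fun x => (∑ g ∈ F n, f (g • x)) / (F n).card - ∫ y, f y ∂μ) 2 μ)
      atTop (nhds 0) := by
  haveI : Fact ((1:ℝ≥0∞) ≤ 2) := ⟨one_le_two⟩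
  haveI : CompleteSpace (invSub μ hmp) := (invSub_isClosed μ hmp).completeSpace_coe
  set fL : Lp ℝ 2 μ := hf.toLp f with hfL
  have hfLc : (fL : X → ℝ) =ᵐ[μ] f := MemLp.coeFn_toLp hf
  obtain ⟨m, hmM, w, hwM, hdec⟩ := (invSub μ hmp).exists_add_mem_mem_orthogonal fL
  -- m is a.e. constant
  have hminv : ∀ g : Γ, (fun x => (m : X → ℝ) (g • x)) =ᵐ[μ] (m : X → ℝ) := by
    intro g
    have h1 := koop_coeFn μ hmp g m
    rw [hmM g] at h1
    exact h1.symm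
  obtain ⟨c, hc⟩ := ae_const_of_invariant (Γ := Γ) herg _
    (Lp.stronglyMeasurable m).measurable hminv
  -- integral computations
  have hwint : Integrable (w : X → ℝ) μ := (Lp.memLp w).integrable one_le_two
  have hmint : Integrable (m : X → ℝ) μ := (Lp.memLp m).integrable one_le_two
  have hintf : ∫ y, f y ∂μ = c := by
    have h1 : ∫ y, f y ∂μ = ∫ y, (fL : X → ℝ) y ∂μ := integral_congr_ae hfLc.symm
    have h2 : ∫ y, (fL : X → ℝ) y ∂μ
        = ∫ y, ((m : X → ℝ) y + (w : X → ℝ) y) ∂μ := by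
      refine integral_congr_ae ?_
      rw [hdec]
      exact Lp.coeFn_add m w
    have h3 : ∫ y, ((m : X → ℝ) y + (w : X → ℝ) y) ∂μ
        = (∫ y, (m : X → ℝ) y ∂μ) + ∫ y, (w : X → ℝ) y ∂μ := integral_add hmint hwint
    have h4 : ∫ y, (m : X → ℝ) y ∂μ = c := by
      rw [integral_congr_ae hc]
      simp
    rw [h1, h2, h3, h4, integral_orth_zero μ hmp w hwM, add_zero]
  -- identify the averages
  have havg : ∀ n, (fun x => (∑ g ∈ F n, f (g • x)) / (F n).card - ∫ y, f y ∂μ)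
      =ᵐ[μ] (avg μ hmp F n w : X → ℝ) := by
    intro n
    have hkoop : ∀ g : Γ, ((koop μ hmp g fL : Lp ℝ 2 μ) : X → ℝ)
        =ᵐ[μ] fun x => f (g • x) := by
      intro g
      refine (koop_coeFn μ hmp g fL).trans ?_
      exact (hmp g).quasiMeasurePreserving.ae_eq_comp hfLc
    have hsum : ((∑ g ∈ F n, koop μ hmp g fL : Lp ℝ 2 μ) : X → ℝ)
        =ᵐ[μ] fun x => ∑ g ∈ F n, f (g • x) := by
      refine (coeFn_finset_sum μ (F n) _).trans ?_
      have hae : ∀ᵐ x ∂μ, ∀ g ∈ (F n : Set Γ),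
          ((koop μ hmp g fL : Lp ℝ 2 μ) : X → ℝ) x = f (g • x) :=
        (MeasureTheory.ae_ball_iff (F n).countable_toSet).2 fun g _ => hkoop g
      filter_upwards [hae] with x hx
      exact Finset.sum_congr rfl fun g hg => hx g (Finset.mem_coe.2 hg)
    have hAfL : ((avg μ hmp F n fL : Lp ℝ 2 μ) : X → ℝ)
        =ᵐ[μ] fun x => (∑ g ∈ F n, f (g • x)) / (F n).card := by
      refine (Lp.coeFn_smul _ _).trans ?_
      filter_upwards [hsum] with x hx
      simp only [Pi.smul_apply, smul_eq_mul, hx]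
      rw [div_eq_inv_mul]
    have hAw : avg μ hmp F n w = avg μ hmp F n fL - m := by
      rw [hdec, avg_add, avg_of_invariant μ hmp F hF.1 n m hmM]
      abel
    rw [hAw]
    have h5 : ((avg μ hmp F n fL - m : Lp ℝ 2 μ) : X → ℝ)
        =ᵐ[μ] fun x => ((avg μ hmp F n fL : Lp ℝ 2 μ) : X → ℝ) x - (m : X → ℝ) x :=
      Lp.coeFn_sub _ _
    refine Filter.EventuallyEq.trans ?_ h5.symm
    filter_upwards [hAfL, hc] with x hx1 hx2
    rw [hx1, hx2, hintf]
  -- conclude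
  have hTw : Tendsto (fun n => avg μ hmp F n w) atTop (nhds 0) :=
    tendsto_avg_orthogonal μ hmp F hF w hwM
  have hTn : Tendsto (fun n => ‖avg μ hmp F n w‖) atTop (nhds 0) := by
    simpa using hTw.norm
  have hTo : Tendsto (fun n => ENNReal.ofReal ‖avg μ hmp F n w‖) atTop (nhds 0) := by
    simpa using ENNReal.tendsto_ofReal hTn
  refine hTo.congr fun n => ?_
  rw [eLpNorm_congr_ae (havg n), Lp.norm_def,
    ENNReal.ofReal_toReal (Lp.eLpNorm_ne_top _)]
end
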